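/- arXiv:2203.04536 — 2 statements merged into one kernel-verified Lean document; each statement's English description precedes it below -/
import Mathlib

section
/- Let m be a positive integer, X = {⊥} ∪ {0,1}^m, and let P = {p₁, p₂} where p₁(⊥) = 0, p₂(⊥) = 1, and p₁(x) = p₂(x) = 1/2 for all x ∈ {0,1}^m. Let μ put probability mass 1/3 on ⊥ and spread the remaining 2/3 uniformly over {0,1}^m. Let D consist of, for every parity function f : {0,1}^m → {0,1} (i.e., f(x) = ⊕_{i∈S} x_i for some S ⊆ {1,…,m}), the distinguisher d with d(⊥) = 1 and d(x) = (−1)^{f(x)} for all x ∈ {0,1}^m. Then the distribution-specific agnostic OI sample complexity satisfies SAMP-DS-A(P, D, 1/8, 1/3, μ) ≥ m − 20. -/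
open scoped ENNReal Pointwise

noncomputable section

namespace OI

/-- Expectation of a real-valued function under a probability mass function. -/
def pexp {α : Type*} (q : PMF α) (f : α → ℝ) : ℝ := ∑' a, (q a).toReal * f a

/-- Inner product of two functions w.r.t. the distribution `μ`. -/
def inn {X : Type*} (μ : PMF X) (f g : X → ℝ) : ℝ := pexp μ fun x => f x * g x

/-- Dual Minkowski (semi)norm of `f` w.r.t. the class `F`. -/
def dnorm {X : Type*} (μ : PMF X) (F : Set (X → ℝ)) (f : X → ℝ) : ℝ :=
  sSup ((fun g => |inn μ f g|) '' F)

/-- `C` is an ε-covering of `G` w.r.t. the seminorm defined by `F`. -/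
def IsCover {X : Type*} (μ : PMF X) (F G : Set (X → ℝ)) (ε : ℝ) (C : Set (X → ℝ)) : Prop :=
  C ⊆ G ∧ ∀ g ∈ G, ∃ c ∈ C, dnorm μ F (g - c) ≤ ε

/-- Covering number `N_{μ,F}(G, ε)` (`⊤` if no finite covering exists). -/
def covN {X : Type*} (μ : PMF X) (F G : Set (X → ℝ)) (ε : ℝ) : ℕ∞ :=
  ⨅ (C : Set (X → ℝ)) (_ : IsCover μ F G ε C), C.encard

/-- Base-2 logarithm of an extended natural number (junk value on `⊤`). -/
def elog2 (N : ℕ∞) : ℝ := Real.logb 2 (N.toNat : ℝ)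

/-- Bernoulli distribution on `Bool` with mean (the truncation to `[0,1]` of) `r`. -/
def bern (r : ℝ) : PMF Bool := PMF.bernoulli (min (Real.toNNReal r) 1) (min_le_right _ _)

/-- The distribution `μ_p` of individual-outcome pairs. -/
def exDist {X : Type*} (μ : PMF X) (p : X → ℝ) : PMF (X × Bool) :=
  μ.bind fun x => (bern (p x)).map fun o => (x, o)

/-- `n` i.i.d. samples from `q`. -/
def iid {α : Type*} (q : PMF α) : (n : ℕ) → PMF (Fin n → α)
  | 0 => PMF.pure Fin.elim0
  | n + 1 => (iid q n).bind fun v => q.map fun a => Fin.cons a v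

/-- Probability of an event under a PMF. -/
def prob {α : Type*} (q : PMF α) (E : Set α) : ℝ≥0∞ := q.toOuterMeasure E

/-- A (possibly randomized) `n`-sample learner. -/
abbrev Learner (X : Type*) (n : ℕ) := (Fin n → X × Bool) → PMF (X → ℝ)

/-- Distribution of the learner output on `n` i.i.d. samples from `μ_{p*}`. -/
def outDist {X : Type*} (μ : PMF X) (pstar : X → ℝ) {n : ℕ} (A : Learner X n) :
    PMF (X → ℝ) :=
  (iid (exDist μ pstar) n).bind A

/-- `p` is a predictor, i.e. takes values in `[0,1]`. -/
def Predictor {X : Type*} (p : X → ℝ) : Prop := ∀ x, p x ∈ Set.Icc (0 : ℝ) 1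

/-- `d` takes values in `[-1,1]`. -/
def Dist1 {X : Type*} (d : X → ℝ) : Prop := ∀ x, d x ∈ Set.Icc (-1 : ℝ) 1

/-- The class `[0,1]^X` of all predictors. -/
def allPred (X : Type*) : Set (X → ℝ) := {p | Predictor p}

/-- The learner `A` succeeds for target `pstar`: with probability at least `1 - δ` it outputs
a predictor whose maximum distinguishing advantage w.r.t. `pstar` over `D` is at most `ε`. -/
def Achieves {X : Type*} (μ : PMF X) (D : Set (X → ℝ)) (ε δ : ℝ) (pstar : X → ℝ) {n : ℕ}
    (A : Learner X n) : Prop :=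
  ENNReal.ofReal (1 - δ) ≤
    prob (outDist μ pstar A) {p | Predictor p ∧ dnorm μ D (p - pstar) ≤ ε}

/-- The agnostic benchmark `inf_{p' ∈ P} ‖p' - pstar‖_{μ,D}`. -/
def agTarget {X : Type*} (μ : PMF X) (P D : Set (X → ℝ)) (pstar : X → ℝ) : ℝ :=
  sInf ((fun p' => dnorm μ D (p' - pstar)) '' P)

/-- The learner `A` succeeds agnostically for target `pstar`. -/
def AchievesAg {X : Type*} (μ : PMF X) (P D : Set (X → ℝ)) (ε δ : ℝ) (pstar : X → ℝ) {n : ℕ}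
    (A : Learner X n) : Prop :=
  ENNReal.ofReal (1 - δ) ≤
    prob (outDist μ pstar A)
      {p | Predictor p ∧ dnorm μ D (p - pstar) ≤ agTarget μ P D pstar + ε}

/-- Distribution-specific realizable OI learner. -/
def DSRL {X : Type*} (μ : PMF X) (P D : Set (X → ℝ)) (ε δ : ℝ) (n : ℕ)
    (A : Learner X n) : Prop :=
  ∀ pstar ∈ P, Achieves μ D ε δ pstar A

/-- Distribution-specific agnostic OI learner. -/
def DSAL {X : Type*} (μ : PMF X) (P D : Set (X → ℝ)) (ε δ : ℝ) (n : ℕ)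
    (A : Learner X n) : Prop :=
  ∀ pstar : X → ℝ, Predictor pstar → AchievesAg μ P D ε δ pstar A

/-- Distribution-free realizable OI learner. -/
def DFRL {X : Type*} (P D : Set (X → ℝ)) (ε δ : ℝ) (n : ℕ) (A : Learner X n) : Prop :=
  ∀ μ : PMF X, DSRL μ P D ε δ n A

/-- Distribution-free agnostic OI learner. -/
def DFAL {X : Type*} (P D : Set (X → ℝ)) (ε δ : ℝ) (n : ℕ) (A : Learner X n) : Prop :=
  ∀ μ : PMF X, DSAL μ P D ε δ n A

/-- Sample complexity of distribution-specific realizable OI. -/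
def SAMPDSR {X : Type*} (μ : PMF X) (P D : Set (X → ℝ)) (ε δ : ℝ) : ℕ∞ :=
  ⨅ (n : ℕ) (_ : ∃ A : Learner X n, DSRL μ P D ε δ n A), (n : ℕ∞)

/-- Sample complexity of distribution-specific agnostic OI. -/
def SAMPDSA {X : Type*} (μ : PMF X) (P D : Set (X → ℝ)) (ε δ : ℝ) : ℕ∞ :=
  ⨅ (n : ℕ) (_ : ∃ A : Learner X n, DSAL μ P D ε δ n A), (n : ℕ∞)

/-- Sample complexity of distribution-free realizable OI. -/
def SAMPDFR {X : Type*} (P D : Set (X → ℝ)) (ε δ : ℝ) : ℕ∞ :=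
  ⨅ (n : ℕ) (_ : ∃ A : Learner X n, DFRL P D ε δ n A), (n : ℕ∞)

/-- Sample complexity of distribution-free agnostic OI. -/
def SAMPDFA {X : Type*} (P D : Set (X → ℝ)) (ε δ : ℝ) : ℕ∞ :=
  ⨅ (n : ℕ) (_ : ∃ A : Learner X n, DFAL P D ε δ n A), (n : ℕ∞)

/-- The points `x 0, …, x (n-1)` are `γ`-fat shattered by `F`. -/
def Shatters {X : Type*} (F : Set (X → ℝ)) (γ : ℝ) {n : ℕ} (x : Fin n → X) : Prop :=
  ∃ r : Fin n → ℝ, ∀ b : Fin n → Bool, ∃ f ∈ F,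
    ∀ i, γ ≤ (if b i then (1 : ℝ) else -1) * (f (x i) - r i)

/-- The `γ`-fat-shattering dimension of `F`. -/
def fatDim {X : Type*} (F : Set (X → ℝ)) (γ : ℝ) : ℕ∞ :=
  ⨆ (n : ℕ) (_ : ∃ x : Fin n → X, Shatters F γ x), (n : ℕ∞)

end OI


open OI

/-- The domain `X = {⊥} ∪ {0,1}^m`, with `none` playing the role of `⊥`. -/
abbrev Cube (m : ℕ) := Option (Fin m → Bool)

/-- The predictor `p₁` with `p₁(⊥) = 0` and `p₁(x) = 1/2` on the cube. -/
def pLow (m : ℕ) : Cube m → ℝ := fun x => x.elim 0 fun _ => 1 / 2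

/-- The predictor `p₂` with `p₂(⊥) = 1` and `p₂(x) = 1/2` on the cube. -/
def pHigh (m : ℕ) : Cube m → ℝ := fun x => x.elim 1 fun _ => 1 / 2

/-- The distribution `μ` putting mass `1/3` on `⊥` and `2/3` uniformly on the cube. -/
def cubeDist (m : ℕ) : PMF (Cube m) :=
  (bern (2 / 3)).bind fun b =>
    if b then (PMF.uniformOfFintype (Fin m → Bool)).map some else PMF.pure none

/-- The parity distinguisher associated with `S ⊆ {1,…,m}`: it maps `⊥` to `1` and `v` in the
cube to `(−1)^{⊕_{i∈S} v_i}`. -/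
def parityD (m : ℕ) (S : Finset (Fin m)) : Cube m → ℝ :=
  fun x => x.elim 1 fun v => (-1 : ℝ) ^ (S.filter fun i => v i = true).card

/-- The class of all parity distinguishers. -/
def parityClass (m : ℕ) : Set (Cube m → ℝ) := Set.range (parityD m)

section Dev
open OI Finset

variable {m : ℕ}

abbrev Vtx (m : ℕ) := Fin m → Bool

/-- number of elements of `2^m` cube -/
lemma card_vtx (m : ℕ) : Fintype.card (Vtx m) = 2 ^ m := by
  simp [Vtx]

-- ### PMF evaluation lemmas

lemma bern_apply_of_mem {r : ℝ} (h0 : 0 ≤ r) (h1 : r ≤ 1) (o : Bool) :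
    bern r o = if o then ENNReal.ofReal r else ENNReal.ofReal (1 - r) := by
  have hmin : min (Real.toNNReal r) 1 = Real.toNNReal r :=
    min_eq_left (Real.toNNReal_le_one.2 h1)
  rw [bern, PMF.bernoulli_apply, hmin]
  cases o with
  | false =>
      simp only [Bool.cond_false, if_neg Bool.false_ne_true]
      rw [ENNReal.coe_sub, ENNReal.coe_one]
      change 1 - ENNReal.ofReal r = _
      rw [← ENNReal.ofReal_one, ← ENNReal.ofReal_sub _ h0]
  | true => exact (if_pos rfl).symm

lemma bern_one (o : Bool) : bern 1 o = if o then 1 else 0 := by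
  rw [bern_apply_of_mem zero_le_one le_rfl]; cases o <;> simp

lemma bern_zero (o : Bool) : bern 0 o = if o then 0 else 1 := by
  rw [bern_apply_of_mem le_rfl zero_le_one]; cases o <;> simp

lemma bern_half (o : Bool) : bern (1/2) o = 1/2 := by
  rw [bern_apply_of_mem (by norm_num) (by norm_num)]
  cases o <;> norm_num <;>
    · rw [ENNReal.ofReal_div_of_pos (by norm_num)]; norm_num

lemma cubeDist_none (m : ℕ) : cubeDist m none = 1/3 := by
  rw [cubeDist, PMF.bind_apply]
  rw [tsum_fintype]
  have h1 : ((PMF.uniformOfFintype (Fin m → Bool)).map some) none = 0 := by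
    simp [PMF.map_apply]
  have h2 : (PMF.pure (none : Cube m)) none = 1 := by simp
  have hb : bern (2/3) false = ENNReal.ofReal (1/3) := by
    rw [bern_apply_of_mem (by norm_num) (by norm_num)]; norm_num
  simp only [Fintype.sum_bool, if_true, if_false, h1, h2, mul_zero, zero_add, mul_one, hb]
  rw [ENNReal.ofReal_div_of_pos (by norm_num)]; norm_num

lemma cubeDist_some (m : ℕ) (v : Vtx m) :
    cubeDist m (some v) = (2/3) * (2 ^ m : ℝ≥0∞)⁻¹ := by
  rw [cubeDist, PMF.bind_apply, tsum_fintype]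
  have h1 : ((PMF.uniformOfFintype (Fin m → Bool)).map some) (some v) = (2 ^ m : ℝ≥0∞)⁻¹ := by
    rw [PMF.map_apply, tsum_fintype]
    rw [Finset.sum_eq_single v]
    · simp [PMF.uniformOfFintype_apply, card_vtx]
    · intro b _ hb; simp [Option.some_inj, hb.symm]
    · simp
  have h2 : (PMF.pure (none : Cube m)) (some v) = 0 := by simp [PMF.pure_apply]
  have hb : bern (2/3) true = ENNReal.ofReal (2/3) := by
    rw [bern_apply_of_mem (by norm_num) (by norm_num)]; norm_num
  simp only [Fintype.sum_bool, if_true, if_false, h1, h2, mul_zero, add_zero, hb,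
    reduceCtorEq, zero_add]
  rw [ENNReal.ofReal_div_of_pos (by norm_num)]; norm_num

lemma exDist_apply {X : Type*} (μ : PMF X) (p : X → ℝ) (x : X) (o : Bool) :
    exDist μ p (x, o) = μ x * bern (p x) o := by
  rw [exDist, PMF.bind_apply]
  rw [tsum_eq_single x]
  · rw [PMF.map_apply, tsum_fintype]
    rw [Finset.sum_eq_single o]
    · simp
    · intro b _ hb; simp [Prod.ext_iff, hb.symm]
    · simp
  · intro x' hx'
    rw [PMF.map_apply, tsum_fintype]
    rw [Finset.sum_eq_zero, mul_zero]
    intro b _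
    rw [if_neg]
    intro h
    exact hx' (by cases h; rfl)

lemma iid_apply {α : Type*} (q : PMF α) : ∀ (n : ℕ) (s : Fin n → α),
    iid q n s = ∏ i, q (s i)
  | 0, s => by
      have : s = Fin.elim0 := funext fun i => i.elim0
      subst this
      simp [iid, PMF.pure_apply]
  | n + 1, s => by
      rw [iid, PMF.bind_apply]
      rw [tsum_eq_single (Fin.tail s)]
      · rw [PMF.map_apply, tsum_eq_single (s 0)]
        · rw [Fin.cons_self_tail s] ; rw [if_pos rfl, iid_apply q n]
          rw [Fin.prod_univ_succ, mul_comm]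
          rfl
        · intro a ha
          rw [if_neg]
          intro h
          exact ha (by rw [h]; simp)
      · intro v hv
        rw [PMF.map_apply]
        rw [ENNReal.tsum_eq_zero.2, mul_zero]
        intro a
        rw [if_neg]
        intro h
        exact hv (by rw [h]; simp [Fin.tail_cons])
-- ### Parity characters
open scoped symmDiff

/-- The ±1 character of the parity on `S`. -/
def chi (m : ℕ) (S : Finset (Fin m)) (v : Vtx m) : ℝ := parityD m S (some v)

lemma chi_def (S : Finset (Fin m)) (v : Vtx m) :
    chi m S v = (-1 : ℝ) ^ (S.filter fun i => v i = true).card := rfl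

lemma chi_eq_prod (S : Finset (Fin m)) (v : Vtx m) :
    chi m S v = ∏ j ∈ S, (if v j then (-1 : ℝ) else 1) := by
  rw [chi_def, ← Finset.prod_const ((-1 : ℝ)), Finset.prod_filter]

lemma chi_eq_prod_univ (S : Finset (Fin m)) (v : Vtx m) :
    chi m S v = ∏ j : Fin m, (if j ∈ S ∧ v j then (-1 : ℝ) else 1) := by
  rw [chi_eq_prod]
  have h : ∀ j : Fin m, (if j ∈ S ∧ v j then (-1:ℝ) else 1)
      = if j ∈ S then (if v j then (-1:ℝ) else 1) else 1 := by
    intro j; by_cases h1 : j ∈ S <;> by_cases h2 : v j <;> simp [h1, h2]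
  rw [Finset.prod_congr rfl fun j _ => h j, Finset.prod_ite_mem, Finset.univ_inter]

lemma chi_mul (S T : Finset (Fin m)) (v : Vtx m) :
    chi m S v * chi m T v = chi m (S ∆ T) v := by
  rw [chi_eq_prod_univ, chi_eq_prod_univ, chi_eq_prod_univ, ← Finset.prod_mul_distrib]
  refine Finset.prod_congr rfl fun j _ => ?_
  by_cases hv : v j
  · by_cases hS : j ∈ S <;> by_cases hT : j ∈ T <;>
      simp [hv, hS, hT, Finset.mem_symmDiff]
  · simp [hv]

lemma chi_empty (v : Vtx m) : chi m ∅ v = 1 := by simp [chi_eq_prod]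

lemma chi_sq (S : Finset (Fin m)) (v : Vtx m) : chi m S v * chi m S v = 1 := by
  rw [chi_mul, symmDiff_self]
  exact chi_empty v

lemma chi_cases (S : Finset (Fin m)) (v : Vtx m) : chi m S v = 1 ∨ chi m S v = -1 := by
  rw [chi_def]
  rcases Nat.even_or_odd ((S.filter fun i => v i = true).card) with h | h
  · exact Or.inl (Even.neg_one_pow h)
  · exact Or.inr (Odd.neg_one_pow h)

lemma chi_abs_le (S : Finset (Fin m)) (v : Vtx m) : |chi m S v| ≤ 1 := by
  rcases chi_cases S v with h | h <;> rw [h] <;> norm_num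

lemma sum_chi (S : Finset (Fin m)) :
    ∑ v : Vtx m, chi m S v = if S = ∅ then (2 ^ m : ℝ) else 0 := by
  classical
  calc ∑ v : Vtx m, chi m S v
      = ∑ v ∈ Fintype.piFinset (fun _ : Fin m => (Finset.univ : Finset Bool)),
          ∏ j : Fin m, (if j ∈ S ∧ v j then (-1:ℝ) else 1) := by
        rw [Fintype.piFinset_univ]
        exact Finset.sum_congr rfl fun v _ => chi_eq_prod_univ S v
    _ = ∏ j : Fin m, ∑ b : Bool, (if j ∈ S ∧ b then (-1:ℝ) else 1) :=
        (Finset.prod_univ_sum (fun _ : Fin m => (Finset.univ : Finset Bool))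
          (fun j b => if j ∈ S ∧ b then (-1:ℝ) else 1)).symm
    _ = if S = ∅ then (2 ^ m : ℝ) else 0 := by
        have h : ∀ j : Fin m, (∑ b : Bool, (if j ∈ S ∧ b then (-1:ℝ) else 1))
            = if j ∈ S then 0 else 2 := by
          intro j; rw [Fintype.sum_bool]; by_cases h : j ∈ S <;> simp [h] <;> norm_num
        rw [Finset.prod_congr rfl fun j _ => h j]
        by_cases hS : S = ∅
        · rw [if_pos hS]; subst hS
          simp [Finset.prod_const]
        · rw [if_neg hS]
          obtain ⟨j0, hj0⟩ := Finset.nonempty_iff_ne_empty.2 hS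
          exact Finset.prod_eq_zero (Finset.mem_univ j0) (by simp [hj0])

lemma sum_chi_mul (S T : Finset (Fin m)) :
    ∑ v : Vtx m, chi m S v * chi m T v = if S = T then (2 ^ m : ℝ) else 0 := by
  classical
  rw [Finset.sum_congr rfl fun v _ => chi_mul S T v, sum_chi]
  congr 1
  rw [eq_iff_iff]
  constructor
  · intro h; exact symmDiff_eq_bot.1 (h.trans Finset.bot_eq_empty.symm)
  · rintro rfl; simp [symmDiff_self]

lemma sum_S_chi (v w : Vtx m) :
    ∑ S : Finset (Fin m), chi m S v * chi m S w = if v = w then (2 ^ m : ℝ) else 0 := by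
  classical
  have hrepr : ∀ S : Finset (Fin m), chi m S v * chi m S w
      = ∏ j ∈ S, ((if v j then (-1:ℝ) else 1) * (if w j then (-1:ℝ) else 1)) := by
    intro S
    rw [chi_eq_prod, chi_eq_prod, Finset.prod_mul_distrib]
  rw [Finset.sum_congr rfl fun S _ => hrepr S]
  have hexp := Finset.prod_add
      (fun j : Fin m => (if v j then (-1:ℝ) else 1) * (if w j then (-1:ℝ) else 1))
      (fun _ : Fin m => (1:ℝ)) Finset.univ
  simp only [Finset.prod_const_one, mul_one, Finset.powerset_univ] at hexp
  rw [← hexp]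
  by_cases hvw : v = w
  · subst hvw
    rw [if_pos rfl]
    have h2 : ∀ j ∈ Finset.univ,
        ((if v j then (-1:ℝ) else 1) * (if v j then (-1:ℝ) else 1) + 1) = 2 := by
      intro j _; by_cases h : v j <;> simp [h] <;> norm_num
    rw [Finset.prod_congr rfl h2, Finset.prod_const]
    simp
  · rw [if_neg hvw]
    obtain ⟨j0, hj0⟩ : ∃ j, v j ≠ w j := by
      by_contra h
      push_neg at h
      exact hvw (funext h)
    apply Finset.prod_eq_zero (Finset.mem_univ j0)
    cases hv : v j0 <;> cases hw : w j0
    · exact absurd (hv.trans hw.symm) hj0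
    · norm_num
    · norm_num
    · exact absurd (hv.trans hw.symm) hj0

/-- Parseval-type identity. -/
lemma sum_sq_coeff (g : Vtx m → ℝ) :
    ∑ S : Finset (Fin m), (∑ v : Vtx m, g v * chi m S v) ^ 2
      = (2^m : ℝ) * ∑ v : Vtx m, (g v) ^ 2 := by
  classical
  have h0 : ∀ S : Finset (Fin m), (∑ v : Vtx m, g v * chi m S v) ^ 2
      = ∑ v : Vtx m, ∑ w : Vtx m, g v * g w * (chi m S v * chi m S w) := by
    intro S
    rw [sq, Finset.sum_mul_sum]
    refine Finset.sum_congr rfl fun v _ => Finset.sum_congr rfl fun w _ => by ring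
  rw [Finset.sum_congr rfl fun S _ => h0 S]
  rw [Finset.sum_comm]
  have hsw : ∀ v : Vtx m, ∑ S : Finset (Fin m), ∑ w : Vtx m, g v * g w * (chi m S v * chi m S w)
      = (2^m : ℝ) * (g v)^2 := by
    intro v
    rw [Finset.sum_comm]
    have h1 : ∀ w : Vtx m, ∑ S : Finset (Fin m), g v * g w * (chi m S v * chi m S w)
        = if v = w then g v * g w * (2^m:ℝ) else 0 := by
      intro w
      rw [← Finset.mul_sum, sum_S_chi]
      by_cases h : v = w <;> simp [h]
    rw [Finset.sum_congr rfl fun w _ => h1 w]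
    rw [Finset.sum_ite_eq (Finset.univ : Finset (Vtx m)) v (fun w => g v * g w * (2^m:ℝ))]
    simp only [Finset.mem_univ, if_true]
    ring
  rw [Finset.sum_congr rfl fun v _ => hsw v, Finset.mul_sum]
-- ### Target predictors

/-- sign of a boolean -/
def sg : Bool → ℝ
  | true => 1
  | false => -1

/-- parity bit -/
def bitb (m : ℕ) (S : Finset (Fin m)) (v : Vtx m) : Bool :=
  decide (Odd ((S.filter fun i => v i = true)).card)

lemma chi_bit (S : Finset (Fin m)) (v : Vtx m) :
    chi m S v = if bitb m S v then -1 else 1 := by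
  rw [chi_def, bitb]
  by_cases h : Odd ((S.filter fun i => v i = true)).card
  · simp [h, Odd.neg_one_pow h]
  · simp [h, Even.neg_one_pow (Nat.not_odd_iff_even.1 h)]

/-- The adversary's target predictors. -/
def tgt (m : ℕ) (S : Finset (Fin m)) (σ : Bool) : Cube m → ℝ :=
  fun x => x.elim (1/2) fun v => (1 + sg σ * chi m S v)/2

/-- label function: the (deterministic) label of a cube point under `tgt`. -/
def labb (m : ℕ) (S : Finset (Fin m)) (σ : Bool) (v : Vtx m) : Bool :=
  xor σ (bitb m S v)

lemma tgt_none (S : Finset (Fin m)) (σ : Bool) : tgt m S σ none = 1/2 := rfl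

lemma tgt_some (S : Finset (Fin m)) (σ : Bool) (v : Vtx m) :
    tgt m S σ (some v) = if labb m S σ v then 1 else 0 := by
  have : tgt m S σ (some v) = (1 + sg σ * chi m S v)/2 := rfl
  rw [this, chi_bit, labb]
  cases σ <;> cases hb : bitb m S v <;> simp [sg] <;> norm_num

lemma tgt_some_eq (S : Finset (Fin m)) (σ : Bool) (v : Vtx m) :
    tgt m S σ (some v) - 1/2 = sg σ / 2 * chi m S v := by
  have : tgt m S σ (some v) = (1 + sg σ * chi m S v)/2 := rfl
  rw [this]; ring

lemma tgt_pred (S : Finset (Fin m)) (σ : Bool) : OI.Predictor (tgt m S σ) := by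
  intro x
  cases x with
  | none => rw [tgt_none]; constructor <;> norm_num
  | some v =>
      rw [tgt_some]
      by_cases h : labb m S σ v <;> simp [h]

-- ### Expectation over cubeDist

lemma toReal_cubeDist_none : (cubeDist m none).toReal = 1/3 := by
  rw [cubeDist_none]; simp

lemma toReal_cubeDist_some (v : Vtx m) :
    (cubeDist m (some v)).toReal = 2/3 * ((2:ℝ)^m)⁻¹ := by
  rw [cubeDist_some]
  rw [ENNReal.toReal_mul, ENNReal.toReal_inv, ENNReal.toReal_div, ENNReal.toReal_pow]
  norm_num

lemma pexp_cubeDist (F : Cube m → ℝ) :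
    pexp (cubeDist m) F
      = 1/3 * F none + 2/3 * ((2:ℝ)^m)⁻¹ * ∑ v : Vtx m, F (some v) := by
  rw [pexp, tsum_fintype, Fintype.sum_option, toReal_cubeDist_none]
  congr 1
  rw [Finset.mul_sum]
  exact Finset.sum_congr rfl fun v _ => by rw [toReal_cubeDist_some]

/-- `⊥`-bias of a predictor -/
def eP (p : Cube m → ℝ) : ℝ := p none - 1/2

/-- Fourier coefficient of the cube-part of a predictor -/
def cHat (m : ℕ) (p : Cube m → ℝ) (T : Finset (Fin m)) : ℝ :=
  ((2:ℝ)^m)⁻¹ * ∑ v : Vtx m, (p (some v) - 1/2) * chi m T v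

lemma inn_tgt (p : Cube m → ℝ) (S T : Finset (Fin m)) (σ : Bool) :
    inn (cubeDist m) (p - tgt m S σ) (parityD m T)
      = 1/3 * eP p + 2/3 * (cHat m p T - sg σ/2 * (if S = T then 1 else 0)) := by
  rw [inn, pexp_cubeDist]
  have hnone : (p - tgt m S σ) none * parityD m T none = eP p := by
    have h0 : parityD m T none = 1 := rfl
    rw [Pi.sub_apply, h0, tgt_none, mul_one, eP]
  have hsome : ∀ v : Vtx m, (p - tgt m S σ) (some v) * parityD m T (some v)
      = (p (some v) - 1/2) * chi m T v - sg σ/2 * (chi m S v * chi m T v) := by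
    intro v
    have h1 : (p - tgt m S σ) (some v) = (p (some v) - 1/2) - (tgt m S σ (some v) - 1/2) := by
      rw [Pi.sub_apply]; ring
    rw [h1, tgt_some_eq]
    have : parityD m T (some v) = chi m T v := rfl
    rw [this]; ring
  rw [hnone, Finset.sum_congr rfl fun v _ => hsome v, Finset.sum_sub_distrib]
  rw [← Finset.mul_sum, sum_chi_mul]
  rw [cHat]
  have h2 : (2:ℝ)^m ≠ 0 := by positivity
  by_cases h : S = T <;>
    simp only [h, if_true, if_false, reduceIte] <;> (try field_simp) <;> (try ring)

-- ### dnorm and the benchmark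

lemma dnorm_le {f : Cube m → ℝ} {c : ℝ} (hc : 0 ≤ c)
    (h : ∀ T, |inn (cubeDist m) f (parityD m T)| ≤ c) :
    dnorm (cubeDist m) (parityClass m) f ≤ c := by
  apply Real.sSup_le _ hc
  rintro x ⟨g, ⟨T, rfl⟩, rfl⟩
  exact h T

lemma inn_le_dnorm (f : Cube m → ℝ) (T : Finset (Fin m)) :
    |inn (cubeDist m) f (parityD m T)| ≤ dnorm (cubeDist m) (parityClass m) f := by
  apply le_csSup
  · have h : ((fun g => |inn (cubeDist m) f g|) '' parityClass m)
        = Set.range (fun T => |inn (cubeDist m) f (parityD m T)|) := by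
      rw [parityClass, ← Set.range_comp]; rfl
    rw [h]
    exact (Set.finite_range _).bddAbove
  · exact ⟨parityD m T, ⟨T, rfl⟩, rfl⟩

lemma bench_le (S : Finset (Fin m)) (σ : Bool) :
    agTarget (cubeDist m) {pLow m, pHigh m} (parityClass m) (tgt m S σ) ≤ 1/6 := by
  set pk : Cube m → ℝ := if σ then pHigh m else pLow m with hpk
  have hmem : pk ∈ ({pLow m, pHigh m} : Set (Cube m → ℝ)) := by
    cases σ <;> simp [hpk]
  have hval : dnorm (cubeDist m) (parityClass m) (pk - tgt m S σ) ≤ 1/6 := by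
    apply dnorm_le (by norm_num)
    intro T
    have h1 : eP pk = sg σ / 2 := by
      cases σ <;> simp [hpk, eP, sg, pLow, pHigh] <;> norm_num
    have h2 : ∀ v, pk (some v) = 1/2 := by
      intro v; cases σ <;> simp [hpk, pLow, pHigh]
    have h3 : cHat m pk T = 0 := by
      rw [cHat]
      rw [Finset.sum_eq_zero fun v _ => by rw [h2 v]; ring]
      ring
    rw [inn_tgt, h1, h3]
    have habs : |(-(1:ℝ)/6)| ≤ 1/6 ∧ |(1:ℝ)/6| ≤ 1/6 := by
      constructor <;> rw [abs_le] <;> constructor <;> norm_num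
    cases σ <;> by_cases h : S = T <;>
      simp only [h, sg, if_true, if_false, reduceIte] <;> norm_num <;>
      first
        | simpa using habs.1
        | simpa using habs.2
  refine le_trans (csInf_le ?_ ⟨pk, hmem, rfl⟩) hval
  apply Set.Finite.bddBelow
  apply Set.Finite.image
  exact (Set.finite_singleton _).insert _

/-- The good event for hypothesis `(S,σ)`. -/
def GD (m : ℕ) (S : Finset (Fin m)) (σ : Bool) : Set (Cube m → ℝ) :=
  {p | OI.Predictor p ∧ dnorm (cubeDist m) (parityClass m) (p - tgt m S σ)
    ≤ agTarget (cubeDist m) {pLow m, pHigh m} (parityClass m) (tgt m S σ) + 1/8}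

lemma good_imp {p : Cube m → ℝ} {S : Finset (Fin m)} {σ : Bool} (hp : p ∈ GD m S σ) :
    1/8 ≤ sg σ * (eP p + 2 * cHat m p S) := by
  have h1 : dnorm (cubeDist m) (parityClass m) (p - tgt m S σ) ≤ 7/24 := by
    refine le_trans hp.2 ?_
    have := bench_le (m := m) S σ
    linarith
  have h2 := le_trans (inn_le_dnorm (p - tgt m S σ) S) h1
  rw [inn_tgt, if_pos rfl] at h2
  have h3 := abs_le.1 h2
  cases σ <;> simp only [sg] at * <;> nlinarith [h3.1, h3.2]

lemma pred_abs_le {p : Cube m → ℝ} (hp : OI.Predictor p) (v : Vtx m) :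
    |p (some v) - 1/2| ≤ 1/2 := by
  have := hp (some v)
  rw [abs_le]
  constructor <;> [linarith [this.1]; linarith [this.2]]

lemma sum_cHat_sq {p : Cube m → ℝ} (hp : OI.Predictor p) :
    ∑ S : Finset (Fin m), (cHat m p S)^2 ≤ 1/4 := by
  have h2 : (0:ℝ) < (2:ℝ)^m := by positivity
  have key := sum_sq_coeff (m := m) (fun v => p (some v) - 1/2)
  have hb : ∑ v : Vtx m, (p (some v) - 1/2)^2 ≤ (2^m : ℝ) * (1/4) := by
    calc ∑ v : Vtx m, (p (some v) - 1/2)^2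
        ≤ ∑ v : Vtx m, (1/4 : ℝ) := by
          apply Finset.sum_le_sum
          intro v _
          have := pred_abs_le hp v
          nlinarith [abs_nonneg (p (some v) - 1/2), sq_abs (p (some v) - 1/2)]
      _ = (Fintype.card (Vtx m)) * (1/4 : ℝ) := by rw [Finset.sum_const, Finset.card_univ]; ring
      _ = (2^m : ℝ) * (1/4) := by rw [card_vtx]; norm_num
  have : ∑ S : Finset (Fin m), (cHat m p S)^2
      = ((2:ℝ)^m)⁻¹ * ((2:ℝ)^m)⁻¹ * ∑ S : Finset (Fin m), (∑ v : Vtx m, (p (some v) - 1/2) * chi m S v)^2 := by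
    rw [Finset.mul_sum]
    refine Finset.sum_congr rfl fun S _ => ?_
    rw [cHat]; ring
  rw [this, key]
  rw [show ((2:ℝ)^m)⁻¹ * ((2:ℝ)^m)⁻¹ * ((2^m:ℝ) * ∑ v : Vtx m, (p (some v) - 1/2)^2)
    = ((2:ℝ)^m)⁻¹ * ∑ v : Vtx m, (p (some v) - 1/2)^2 by field_simp; ring]
  calc ((2:ℝ)^m)⁻¹ * ∑ v : Vtx m, (p (some v) - 1/2)^2
      ≤ ((2:ℝ)^m)⁻¹ * ((2^m:ℝ) * (1/4)) := by
        apply mul_le_mul_of_nonneg_left hb (by positivity)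
    _ = 1/4 := by field_simp

lemma minority_card {p : Cube m → ℝ} (hp : OI.Predictor p) (σ : Bool)
    (hσ : sg σ * eP p ≤ 0) :
    (Finset.univ.filter fun S : Finset (Fin m) =>
      1/8 ≤ sg σ * (eP p + 2 * cHat m p S)).card ≤ 64 := by
  classical
  set s := Finset.univ.filter fun S : Finset (Fin m) =>
      1/8 ≤ sg σ * (eP p + 2 * cHat m p S) with hs
  have hlow : ∀ S ∈ s, (1/256 : ℝ) ≤ (cHat m p S)^2 := by
    intro S hS
    rw [hs, Finset.mem_filter] at hS
    have h1 : 1/8 ≤ sg σ * (eP p + 2 * cHat m p S) := hS.2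
    have h2 : 1/16 ≤ sg σ * cHat m p S := by
      cases σ <;> simp only [sg] at * <;> nlinarith
    have h3 : 1/16 ≤ |cHat m p S| :=
      calc (1/16:ℝ) ≤ sg σ * cHat m p S := h2
        _ ≤ |sg σ * cHat m p S| := le_abs_self _
        _ = |sg σ| * |cHat m p S| := abs_mul _ _
        _ = |cHat m p S| := by cases σ <;> simp [sg]
    nlinarith [sq_abs (cHat m p S)]
  have hcard : (s.card : ℝ) * (1/256) ≤ ∑ S ∈ s, (cHat m p S)^2 := by
    have := Finset.card_nsmul_le_sum s (fun S => (cHat m p S)^2) (1/256 : ℝ) hlow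
    rwa [nsmul_eq_mul] at this
  have hsum : ∑ S ∈ s, (cHat m p S)^2 ≤ ∑ S : Finset (Fin m), (cHat m p S)^2 := by
    apply Finset.sum_le_sum_of_subset_of_nonneg (Finset.filter_subset _ _)
    intro S _ _; positivity
  have := le_trans hcard (le_trans hsum (sum_cHat_sq hp))
  have h64 : (s.card : ℝ) ≤ 64 := by nlinarith
  exact_mod_cast h64
-- ### GF(2) duality

/-- Boolean vector as a GF(2) vector. -/
def vecz (m : ℕ) (v : Vtx m) : Fin m → ZMod 2 := fun j => if v j then 1 else 0

lemma zmod2_cases (a : ZMod 2) : a = 0 ∨ a = 1 := by revert a; decide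

lemma zmod2_zero_ne_one : ¬((0:ZMod 2) = 1) := by decide

lemma zmod2_add_self (a : ZMod 2) : a + a = 0 := by revert a; decide

lemma natCast_zmod2_eq_one_iff (k : ℕ) : ((k : ZMod 2) = 1) ↔ Odd k := by
  rw [Nat.odd_iff, ← ZMod.natCast_mod k 2]
  rcases Nat.mod_two_eq_zero_or_one k with h | h <;> rw [h] <;> simp

lemma bitb_iff (S : Finset (Fin m)) (v : Vtx m) :
    bitb m S v = true ↔ (∑ j ∈ S, vecz m v j) = 1 := by
  have h1 : (∑ j ∈ S, vecz m v j) = ((S.filter fun j => v j = true).card : ZMod 2) := by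
    simp only [vecz]
    rw [Finset.sum_boole]
  rw [h1, natCast_zmod2_eq_one_iff, bitb]
  simp

lemma exists_dual {k : ℕ} (T : Finset (Fin k)) (w : Fin k → (Fin m → ZMod 2))
    (h : ∀ y ⊆ T, (∑ i ∈ y, w i) = 0 → Even y.card) :
    ∃ c : Fin m → ZMod 2, ∀ i ∈ T, (∑ j, w i j * c j) = 1 := by
  classical
  haveI : Fact (Nat.Prime 2) := ⟨Nat.prime_two⟩
  -- the linear map sending coefficients to combinations
  let Φ : (Fin k → ZMod 2) →ₗ[ZMod 2] (Fin m → ZMod 2) :=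
    { toFun := fun y => ∑ i ∈ T, y i • w i
      map_add' := by
        intro a b
        rw [← Finset.sum_add_distrib]
        exact Finset.sum_congr rfl fun i _ => by rw [Pi.add_apply, add_smul]
      map_smul' := by
        intro c a
        rw [Finset.smul_sum]
        exact Finset.sum_congr rfl fun i _ => by
          rw [Pi.smul_apply, smul_smul]
          rfl }
  let ψ : (Fin k → ZMod 2) →ₗ[ZMod 2] ZMod 2 :=
    { toFun := fun y => ∑ i ∈ T, y i
      map_add' := by
        intro a b
        rw [← Finset.sum_add_distrib]
        rfl
      map_smul' := by
        intro c a
        simp only [Pi.smul_apply, smul_eq_mul, RingHom.id_apply]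
        rw [Finset.mul_sum] }
  have hker : LinearMap.ker Φ ≤ LinearMap.ker ψ := by
    intro y hy
    rw [LinearMap.mem_ker] at hy ⊢
    have hrepr : ∀ i ∈ T, y i • w i = if y i = 1 then w i else 0 := by
      intro i _
      rcases zmod2_cases (y i) with h0 | h1
      · rw [h0, zero_smul, if_neg zmod2_zero_ne_one]
      · rw [h1, one_smul, if_pos rfl]
    have hY : (∑ i ∈ T.filter fun i => y i = 1, w i) = 0 := by
      rw [Finset.sum_filter, ← Finset.sum_congr rfl hrepr]
      exact hy
    have heven := h _ (Finset.filter_subset _ _) hY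
    show (∑ i ∈ T, y i) = 0
    have h2 : (∑ i ∈ T, y i) = ((T.filter fun i => y i = 1).card : ZMod 2) := by
      rw [← Finset.sum_boole]
      refine Finset.sum_congr rfl fun i hi => ?_
      rcases zmod2_cases (y i) with h0 | h1
      · rw [h0, if_neg zmod2_zero_ne_one]
      · rw [h1, if_pos rfl]
    rw [h2]
    rcases heven with ⟨t, ht⟩
    rw [ht]
    push_cast
    exact zmod2_add_self _
  -- factor ψ through the range of Φ and extend to the whole space
  obtain ⟨q, hq⟩ := Submodule.exists_isCompl (LinearMap.range Φ)
  let g₀ : LinearMap.range Φ →ₗ[ZMod 2] ZMod 2 :=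
    (Submodule.liftQ (LinearMap.ker Φ) ψ hker).comp
      (LinearMap.quotKerEquivRange Φ).symm.toLinearMap
  let g : (Fin m → ZMod 2) →ₗ[ZMod 2] ZMod 2 :=
    g₀.comp ((LinearMap.range Φ).linearProjOfIsCompl q hq)
  refine ⟨fun j => g (Pi.single j 1), fun i hi => ?_⟩
  have hwi : Φ (fun i' => if i' = i then 1 else 0) = w i := by
    show (∑ i' ∈ T, (if i' = i then (1 : ZMod 2) else 0) • w i') = w i
    rw [Finset.sum_eq_single i]
    · rw [if_pos rfl, one_smul]
    · intro b _ hb; rw [if_neg hb, zero_smul]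
    · intro hiT; exact absurd hi hiT
  have hmem : w i ∈ LinearMap.range Φ := ⟨_, hwi⟩
  have hg : g (w i) = 1 := by
    have hproj : ((LinearMap.range Φ).linearProjOfIsCompl q hq) (w i) = ⟨w i, hmem⟩ :=
      Submodule.linearProjOfIsCompl_apply_left hq ⟨w i, hmem⟩
    show g₀ _ = 1
    rw [hproj]
    have hsub : (⟨w i, hmem⟩ : LinearMap.range Φ)
        = ⟨Φ (fun i' => if i' = i then 1 else 0), LinearMap.mem_range_self _ _⟩ :=
      Subtype.ext hwi.symm
    show (Submodule.liftQ (LinearMap.ker Φ) ψ hker)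
        ((LinearMap.quotKerEquivRange Φ).symm ⟨w i, hmem⟩) = 1
    rw [hsub, LinearMap.quotKerEquivRange_symm_apply_image]
    have hmk : (LinearMap.ker Φ).mkQ (fun i' => if i' = i then (1:ZMod 2) else 0)
        = Submodule.Quotient.mk (fun i' => if i' = i then (1:ZMod 2) else 0) := rfl
    rw [hmk, Submodule.liftQ_apply]
    show (∑ i' ∈ T, if i' = i then (1:ZMod 2) else 0) = 1
    rw [Finset.sum_eq_single i]
    · rw [if_pos rfl]
    · intro b _ hb; rw [if_neg hb]
    · intro hiT; exact absurd hi hiT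
  calc (∑ j, w i j * g (Pi.single j 1)) = g (w i) := by
        have hx : w i = ∑ j, (w i j) • Pi.single j (1 : ZMod 2) := by
          funext j'
          rw [Finset.sum_apply]
          rw [Finset.sum_eq_single j']
          · rw [Pi.smul_apply, Pi.single_eq_same, smul_eq_mul, mul_one]
          · intro b _ hb
            rw [Pi.smul_apply, Pi.single_eq_of_ne (Ne.symm hb), smul_eq_mul, mul_zero]
          · intro hj'; exact absurd (Finset.mem_univ j') hj'
        conv_rhs => rw [hx]
        rw [map_sum]
        exact Finset.sum_congr rfl fun j _ => by rw [map_smul, smul_eq_mul]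
    _ = 1 := hg

lemma bitb_symmDiff (S S' : Finset (Fin m)) (v : Vtx m) :
    bitb m (S ∆ S') v = xor (bitb m S v) (bitb m S' v) := by
  have h := chi_mul S S' v
  rw [chi_bit, chi_bit, chi_bit] at h
  cases hb : bitb m S v <;> cases hb' : bitb m S' v <;>
    rw [hb, hb'] at h <;>
    cases hc : bitb m (S ∆ S') v <;> rw [hc] at h <;> simp_all <;> norm_num at h
-- ### Sample space structure

/-- samples -/
abbrev Samp (m n : ℕ) := Fin n → Cube m × Bool

/-- single-example consistency with hypothesis `(S,σ)` -/
def Ci (m : ℕ) (S : Finset (Fin m)) (σ : Bool) (z : Cube m × Bool) : Prop :=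
  ∀ v : Vtx m, z.1 = some v → z.2 = labb m S σ v

/-- base weight: the label-independent part of the sample probability -/
def baseW (m : ℕ) : Cube m → ℝ≥0∞ := fun x => x.elim (1/6) fun _ => (2/3) * (2^m : ℝ≥0∞)⁻¹

/-- base weight of a sample sequence -/
def BW (m n : ℕ) (s : Samp m n) : ℝ≥0∞ := ∏ i, baseW m (s i).1

instance instDecCi (S : Finset (Fin m)) (σ : Bool) (z : Cube m × Bool) :
    Decidable (Ci m S σ z) :=
  inferInstanceAs (Decidable (∀ v, z.1 = some v → z.2 = labb m S σ v))

lemma ennreal_sixth : (1/3 : ℝ≥0∞) * (1/2) = 1/6 := by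
  rw [one_div, one_div, one_div,
    ← ENNReal.mul_inv (Or.inl (by norm_num)) (Or.inl (by norm_num))]
  norm_num

lemma exDist_tgt (S : Finset (Fin m)) (σ : Bool) (z : Cube m × Bool) :
    exDist (cubeDist m) (tgt m S σ) z = baseW m z.1 * (if Ci m S σ z then 1 else 0) := by
  classical
  obtain ⟨x, o⟩ := z
  rw [exDist_apply]
  cases x with
  | none =>
      have hCi : Ci m S σ (none, o) := by intro v hv; exact absurd hv (by simp)
      rw [if_pos hCi, tgt_none, bern_half, cubeDist_none]
      show (1/3 : ℝ≥0∞) * (1/2) = baseW m none * 1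
      rw [ennreal_sixth, mul_one]
      rfl
  | some v =>
      have hCi : Ci m S σ (some v, o) ↔ o = labb m S σ v := by
        constructor
        · intro h; exact h v rfl
        · intro h v' hv'
          rw [Option.some_inj] at hv'
          subst hv'; exact h
      have hbern : bern (tgt m S σ (some v)) o = if o = labb m S σ v then 1 else 0 := by
        rw [tgt_some]
        cases hl : labb m S σ v <;> cases o <;> simp [bern_one, bern_zero]
      rw [hbern, cubeDist_some]
      show _ = baseW m (some v) * _
      have hbw : baseW m (some v) = (2/3) * (2^m : ℝ≥0∞)⁻¹ := rfl
      rw [hbw]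
      by_cases h : Ci m S σ (some v, o)
      · rw [if_pos h, if_pos (hCi.1 h)]
      · rw [if_neg h, if_neg fun hh => h (hCi.2 hh)]

lemma iid_tgt (n : ℕ) (S : Finset (Fin m)) (σ : Bool) (s : Samp m n) :
    iid (exDist (cubeDist m) (tgt m S σ)) n s
      = BW m n s * (if ∀ i, Ci m S σ (s i) then 1 else 0) := by
  classical
  rw [iid_apply]
  have h1 : ∀ i : Fin n, exDist (cubeDist m) (tgt m S σ) (s i)
      = baseW m (s i).1 * (if Ci m S σ (s i) then 1 else 0) := fun i => exDist_tgt S σ (s i)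
  rw [Finset.prod_congr rfl fun i _ => h1 i, Finset.prod_mul_distrib]
  rw [BW]
  congr 1
  rw [Finset.prod_boole]
  congr 1
  rw [eq_iff_iff]
  constructor
  · intro h i; exact h i (Finset.mem_univ i)
  · intro h i _; exact h i

/-- total mass 1, in finite-sum form -/
lemma sum_iid_tgt (n : ℕ) (S : Finset (Fin m)) (σ : Bool) :
    ∑ s : Samp m n, BW m n s * (if ∀ i, Ci m S σ (s i) then 1 else 0) = 1 := by
  classical
  rw [← Finset.sum_congr rfl fun s _ => iid_tgt n S σ s]
  rw [← tsum_fintype (L := SummationFilter.unconditional _)]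
  exact (iid (exDist (cubeDist m) (tgt m S σ)) n).tsum_coe

lemma sum_cubeDist (m : ℕ) : ∑ x : Cube m, cubeDist m x = 1 := by
  rw [← tsum_fintype (L := SummationFilter.unconditional _)]
  exact (cubeDist m).tsum_coe

lemma baseW_le (x : Cube m) : baseW m x ≤ cubeDist m x := by
  cases x with
  | none =>
      rw [cubeDist_none]
      show (1/6 : ℝ≥0∞) ≤ 1/3
      rw [one_div, one_div]
      exact ENNReal.inv_le_inv.2 (by norm_num)
  | some v => rw [cubeDist_some]; exact le_of_eq rfl

lemma sum_BW_le (n : ℕ) : ∑ s : Samp m n, BW m n s ≤ 2^n := by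
  classical
  have h1 : ∑ s : Samp m n, BW m n s
      = ∏ i : Fin n, ∑ z : Cube m × Bool, baseW m z.1 := by
    rw [Finset.prod_univ_sum]
    rw [← Fintype.piFinset_univ]
    rfl
  rw [h1]
  have h2 : ∑ z : Cube m × Bool, baseW m z.1 ≤ 2 := by
    rw [Fintype.sum_prod_type]
    calc ∑ x : Cube m, ∑ _o : Bool, baseW m x
        = ∑ x : Cube m, 2 * baseW m x := by
          refine Finset.sum_congr rfl fun x _ => ?_
          rw [Fintype.sum_bool, two_mul]
      _ = 2 * ∑ x : Cube m, baseW m x := by rw [Finset.mul_sum]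
      _ ≤ 2 * ∑ x : Cube m, cubeDist m x := by
          apply mul_le_mul_right
          exact Finset.sum_le_sum fun x _ => baseW_le x
      _ = 2 := by rw [sum_cubeDist]; norm_num
  calc ∏ _i : Fin n, ∑ z : Cube m × Bool, baseW m z.1
      ≤ ∏ _i : Fin n, (2:ℝ≥0∞) := Finset.prod_le_prod' fun i _ => h2
    _ = 2^n := by rw [Finset.prod_const, Finset.card_univ, Fintype.card_fin]
-- ### Counting good hypotheses at a fixed sample

noncomputable instance instDecGD (S : Finset (Fin m)) (σ : Bool) (p : Cube m → ℝ) :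
    Decidable (p ∈ GD m S σ) := Classical.propDecidable _

/-- consistency count -/
def CC (m n : ℕ) (σ : Bool) (s : Samp m n) : ℕ :=
  (Finset.univ.filter fun S : Finset (Fin m) => ∀ i, Ci m S σ (s i)).card

lemma good_count {n : ℕ} (s : Samp m n) (p : Cube m → ℝ) :
    ∑ S : Finset (Fin m), ∑ σ : Bool,
      ((if ∀ i, Ci m S σ (s i) then (1:ℝ≥0∞) else 0) * (if p ∈ GD m S σ then 1 else 0))
      ≤ (max (CC m n true s) (CC m n false s) : ℕ) + 64 := by
  have hterm : ∀ σ : Bool, ∑ S : Finset (Fin m),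
      ((if ∀ i, Ci m S σ (s i) then (1:ℝ≥0∞) else 0) * (if p ∈ GD m S σ then 1 else 0))
      = ((Finset.univ.filter fun S : Finset (Fin m) =>
          (∀ i, Ci m S σ (s i)) ∧ p ∈ GD m S σ).card : ℝ≥0∞) := by
    intro σ
    rw [Finset.card_filter, Nat.cast_sum]
    refine Finset.sum_congr rfl fun S _ => ?_
    by_cases h1 : ∀ i, Ci m S σ (s i) <;> by_cases h2 : p ∈ GD m S σ <;>
      simp [h1, h2]
  have hsum : ∑ S : Finset (Fin m), ∑ σ : Bool,
      ((if ∀ i, Ci m S σ (s i) then (1:ℝ≥0∞) else 0) * (if p ∈ GD m S σ then 1 else 0))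
      = ∑ σ : Bool, ((Finset.univ.filter fun S : Finset (Fin m) =>
          (∀ i, Ci m S σ (s i)) ∧ p ∈ GD m S σ).card : ℝ≥0∞) := by
    rw [Finset.sum_comm]
    exact Finset.sum_congr rfl fun σ _ => hterm σ
  rw [hsum, Fintype.sum_bool]
  set cT := (Finset.univ.filter fun S : Finset (Fin m) =>
      (∀ i, Ci m S true (s i)) ∧ p ∈ GD m S true).card with hcT
  set cF := (Finset.univ.filter fun S : Finset (Fin m) =>
      (∀ i, Ci m S false (s i)) ∧ p ∈ GD m S false).card with hcF
  have hsubC : ∀ σ : Bool, (Finset.univ.filter fun S : Finset (Fin m) =>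
      (∀ i, Ci m S σ (s i)) ∧ p ∈ GD m S σ).card ≤ CC m n σ s := by
    intro σ
    apply Finset.card_le_card
    intro S hS
    rw [Finset.mem_filter] at hS ⊢
    exact ⟨hS.1, hS.2.1⟩
  by_cases hpred : OI.Predictor p
  · have hminor : ∀ σ : Bool, sg σ * eP p ≤ 0 →
        (Finset.univ.filter fun S : Finset (Fin m) =>
          (∀ i, Ci m S σ (s i)) ∧ p ∈ GD m S σ).card ≤ 64 := by
      intro σ hσ
      refine le_trans (Finset.card_le_card ?_) (minority_card hpred σ hσ)
      intro S hS
      rw [Finset.mem_filter] at hS ⊢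
      exact ⟨Finset.mem_univ S, good_imp hS.2.2⟩
    have hfin : cT + cF ≤ max (CC m n true s) (CC m n false s) + 64 := by
      by_cases he : 0 ≤ eP p
      · have h1 : cF ≤ 64 := hminor false (by rw [show sg false = -1 from rfl]; linarith)
        have h2 : cT ≤ max (CC m n true s) (CC m n false s) :=
          le_trans (hsubC true) (le_max_left _ _)
        omega
      · have h1 : cT ≤ 64 := hminor true (by rw [show sg true = 1 from rfl]; linarith)
        have h2 : cF ≤ max (CC m n true s) (CC m n false s) :=
          le_trans (hsubC false) (le_max_right _ _)
        omega
    calc (cT : ℝ≥0∞) + cF = ((cT + cF : ℕ) : ℝ≥0∞) := by push_cast; ring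
      _ ≤ ((max (CC m n true s) (CC m n false s) + 64 : ℕ) : ℝ≥0∞) := by
          exact_mod_cast Nat.cast_le.2 hfin
      _ = (max (CC m n true s) (CC m n false s) : ℕ) + 64 := by push_cast; ring
  · have hzero : ∀ σ : Bool, (Finset.univ.filter fun S : Finset (Fin m) =>
        (∀ i, Ci m S σ (s i)) ∧ p ∈ GD m S σ).card = 0 := by
      intro σ
      rw [Finset.card_eq_zero, Finset.filter_eq_empty_iff]
      intro S _
      rintro ⟨-, hin⟩
      exact hpred hin.1
    rw [hcT, hcF, hzero true, hzero false]
    simp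

lemma inner_bound {n : ℕ} (A : OI.Learner (Cube m) n) (s : Samp m n) :
    ∑ S : Finset (Fin m), ∑ σ : Bool,
      ((if ∀ i, Ci m S σ (s i) then (1:ℝ≥0∞) else 0) * OI.prob (A s) (GD m S σ))
      ≤ (max (CC m n true s) (CC m n false s) : ℕ) + 64 := by
  have h2 : ∀ (S : Finset (Fin m)) (σ : Bool) (p : Cube m → ℝ),
      Set.indicator (GD m S σ) (⇑(A s)) p = A s p * (if p ∈ GD m S σ then 1 else 0) := by
    intro S σ p; by_cases h : p ∈ GD m S σ <;> simp [Set.indicator, h]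
  have h1 : ∀ (S : Finset (Fin m)) (σ : Bool),
      (if ∀ i, Ci m S σ (s i) then (1:ℝ≥0∞) else 0) * OI.prob (A s) (GD m S σ)
      = ∑' p : Cube m → ℝ, A s p *
          ((if ∀ i, Ci m S σ (s i) then (1:ℝ≥0∞) else 0) * (if p ∈ GD m S σ then 1 else 0)) := by
    intro S σ
    rw [OI.prob, PMF.toOuterMeasure_apply, ← ENNReal.tsum_mul_left]
    refine tsum_congr fun p => ?_
    rw [h2 S σ p]
    ring
  calc ∑ S : Finset (Fin m), ∑ σ : Bool,
        ((if ∀ i, Ci m S σ (s i) then (1:ℝ≥0∞) else 0) * OI.prob (A s) (GD m S σ))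
      = ∑' p : Cube m → ℝ, ∑ S : Finset (Fin m), ∑ σ : Bool, A s p *
          ((if ∀ i, Ci m S σ (s i) then (1:ℝ≥0∞) else 0) * (if p ∈ GD m S σ then 1 else 0)) := by
        rw [Finset.sum_congr rfl fun S _ => Finset.sum_congr rfl fun σ _ => h1 S σ]
        rw [Finset.sum_congr rfl fun S _ => (Summable.tsum_finsetSum fun σ _ => ENNReal.summable).symm]
        exact (Summable.tsum_finsetSum fun S _ => ENNReal.summable).symm
    _ = ∑' p : Cube m → ℝ, A s p * ∑ S : Finset (Fin m), ∑ σ : Bool,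
          ((if ∀ i, Ci m S σ (s i) then (1:ℝ≥0∞) else 0) * (if p ∈ GD m S σ then 1 else 0)) := by
        refine tsum_congr fun p => ?_
        rw [Finset.mul_sum]
        exact Finset.sum_congr rfl fun S _ => by rw [Finset.mul_sum]
    _ ≤ ∑' p : Cube m → ℝ, A s p *
          ((max (CC m n true s) (CC m n false s) : ℕ) + 64) := by
        exact ENNReal.tsum_le_tsum fun p => mul_le_mul_right (good_count s p) _
    _ = ((max (CC m n true s) (CC m n false s) : ℕ) + 64) := by
        rw [ENNReal.tsum_mul_right, (A s).tsum_coe, one_mul]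
-- ### Bad samples and the label-flip bijection

/-- The sample positions admit an odd linear dependency. -/
def BadX (m n : ℕ) (x : Fin n → Cube m) : Prop :=
  ∃ y : Finset (Fin n), Odd y.card ∧ ∃ u : Fin n → Vtx m,
    (∀ i ∈ y, x i = some (u i)) ∧ (∑ i ∈ y, vecz m (u i)) = 0

noncomputable instance instDecBadX (n : ℕ) (x : Fin n → Cube m) : Decidable (BadX m n x) :=
  Classical.propDecidable _

lemma exists_flip {n : ℕ} {x : Fin n → Cube m} (hx : ¬ BadX m n x) :
    ∃ Sx : Finset (Fin m), ∀ i v, x i = some v → bitb m Sx v = true := by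
  classical
  set T := Finset.univ.filter (fun i : Fin n => x i ≠ none) with hT
  set w : Fin n → (Fin m → ZMod 2) := fun i => (x i).elim 0 (vecz m) with hw
  have hyp : ∀ y ⊆ T, (∑ i ∈ y, w i) = 0 → Even y.card := by
    intro y hsub hsum
    by_contra hodd
    rw [Nat.not_even_iff_odd] at hodd
    set u : Fin n → Vtx m := fun i => (x i).getD (fun _ => false) with hu
    have hxy : ∀ i ∈ y, x i = some (u i) := by
      intro i hi
      have hne : x i ≠ none := by
        have h := hsub hi; rw [hT, Finset.mem_filter] at h; exact h.2
      cases hxi : x i with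
      | none => exact absurd hxi hne
      | some v => rw [hu]; simp only [hxi]; rfl
    apply hx
    refine ⟨y, hodd, u, hxy, ?_⟩
    rw [← hsum]
    refine Finset.sum_congr rfl fun i hi => ?_
    rw [hw]
    simp only [hxy i hi]
    rfl
  obtain ⟨c, hc⟩ := exists_dual T w hyp
  refine ⟨Finset.univ.filter (fun j => c j = 1), ?_⟩
  intro i v hxi
  have hiT : i ∈ T := by
    rw [hT, Finset.mem_filter]
    exact ⟨Finset.mem_univ i, by rw [hxi]; simp⟩
  have h1 := hc i hiT
  rw [bitb_iff]
  have h2 : ∑ j ∈ Finset.univ.filter (fun j => c j = 1), vecz m v j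
      = ∑ j, vecz m v j * c j := by
    rw [Finset.sum_filter]
    refine Finset.sum_congr rfl fun j _ => ?_
    rcases zmod2_cases (c j) with h0 | h1'
    · rw [h0, if_neg zmod2_zero_ne_one, mul_zero]
    · rw [h1', if_pos rfl, mul_one]
  rw [h2]
  have h3 : w i = vecz m v := by rw [hw]; simp only [hxi]; rfl
  rw [← h3]
  exact h1

lemma CC_flip {n : ℕ} {s : Samp m n} (h : ¬ BadX m n (fun i => (s i).1)) :
    CC m n true s = CC m n false s := by
  classical
  obtain ⟨Sx, hSx⟩ := exists_flip h
  have hlab : ∀ (S : Finset (Fin m)) (i : Fin n) (v : Vtx m), (s i).1 = some v →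
      labb m (S ∆ Sx) false v = labb m S true v := by
    intro S i v hv
    rw [labb, labb, bitb_symmDiff, hSx i v hv]
    cases bitb m S v <;> rfl
  have hCi : ∀ (S : Finset (Fin m)), (∀ i, Ci m S true (s i)) ↔
      (∀ i, Ci m (S ∆ Sx) false (s i)) := by
    intro S
    constructor
    · intro hall i v hv
      rw [hlab S i v hv]
      exact hall i v hv
    · intro hall i v hv
      rw [← hlab S i v hv]
      exact hall i v hv
  rw [CC, CC]
  apply Finset.card_bij' (fun S _ => S ∆ Sx) (fun S _ => S ∆ Sx)
  · intro S hS
    rw [Finset.mem_filter] at hS ⊢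
    exact ⟨Finset.mem_univ _, (hCi S).1 hS.2⟩
  · intro S hS
    rw [Finset.mem_filter] at hS ⊢
    refine ⟨Finset.mem_univ _, ?_⟩
    apply (hCi (S ∆ Sx)).2
    rw [symmDiff_symmDiff_cancel_right Sx S]
    exact hS.2
  · intro S _; exact symmDiff_symmDiff_cancel_right Sx S
  · intro S _; exact symmDiff_symmDiff_cancel_right Sx S
-- ### Splitting samples into positions and labels

lemma sum_samp_split {n : ℕ} (f : Samp m n → ℝ≥0∞) :
    ∑ s : Samp m n, f s
      = ∑ x : Fin n → Cube m, ∑ o : Fin n → Bool, f (fun i => (x i, o i)) := by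
  have h1 : ∑ p : (Fin n → Cube m) × (Fin n → Bool), f (fun i => (p.1 i, p.2 i))
      = ∑ x : Fin n → Cube m, ∑ o : Fin n → Bool, f (fun i => (x i, o i)) :=
    Fintype.sum_prod_type (fun p : (Fin n → Cube m) × (Fin n → Bool) => f fun i => (p.1 i, p.2 i))
  rw [← h1]
  exact Fintype.sum_equiv (Equiv.arrowProdEquivProdArrow (Fin n) (fun _ => Cube m) (fun _ => Bool))
    f (fun p => f (fun i => (p.1 i, p.2 i))) (fun s => rfl)

lemma sum_o_CC {n : ℕ} (x : Fin n → Cube m) (σ : Bool) :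
    ∑ o : Fin n → Bool, ((CC m n σ (fun i => (x i, o i)) : ℝ≥0∞))
      = 2^m * ∏ i, (if x i = none then (2:ℝ≥0∞) else 1) := by
  classical
  have hcast : ∀ o : Fin n → Bool, ((CC m n σ (fun i => (x i, o i)) : ℝ≥0∞))
      = ∑ S : Finset (Fin m), ∏ i, (if Ci m S σ (x i, o i) then (1:ℝ≥0∞) else 0) := by
    intro o
    rw [CC, Finset.card_filter, Nat.cast_sum]
    refine Finset.sum_congr rfl fun S _ => ?_
    rw [Finset.prod_boole]
    by_cases h : ∀ i, Ci m S σ (x i, o i)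
    · rw [if_pos h, if_pos fun i _ => h i, Nat.cast_one]
    · rw [if_neg h, if_neg fun hh => h fun i => hh i (Finset.mem_univ i), Nat.cast_zero]
  rw [Finset.sum_congr rfl fun o _ => hcast o, Finset.sum_comm]
  have hS : ∀ S : Finset (Fin m),
      ∑ o : Fin n → Bool, ∏ i, (if Ci m S σ (x i, o i) then (1:ℝ≥0∞) else 0)
      = ∏ i, (if x i = none then (2:ℝ≥0∞) else 1) := by
    intro S
    have hstep : ∑ o ∈ Fintype.piFinset (fun _ : Fin n => (Finset.univ : Finset Bool)),
        ∏ i, (fun (i : Fin n) (b : Bool) => if Ci m S σ (x i, b) then (1:ℝ≥0∞) else 0) i (o i)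
        = ∏ i : Fin n, ∑ b : Bool, (if Ci m S σ (x i, b) then (1:ℝ≥0∞) else 0) :=
      (Finset.prod_univ_sum (fun _ : Fin n => (Finset.univ : Finset Bool))
        (fun i b => if Ci m S σ (x i, b) then (1:ℝ≥0∞) else 0)).symm
    rw [Fintype.piFinset_univ] at hstep
    rw [hstep]
    refine Finset.prod_congr rfl fun i _ => ?_
    cases hxi : x i with
    | none =>
        rw [if_pos rfl]
        have hci : ∀ b : Bool, Ci m S σ (none, b) := by
          intro b v hv; exact absurd hv (by simp)
        rw [Fintype.sum_bool, if_pos (hci true), if_pos (hci false)]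
        exact one_add_one_eq_two
    | some v =>
        rw [if_neg (by simp)]
        have hci : ∀ b : Bool, Ci m S σ (some v, b) ↔ b = labb m S σ v := by
          intro b
          constructor
          · intro h; exact h v rfl
          · intro h v' hv'; rw [Option.some_inj] at hv'; subst hv'; exact h
        rw [Fintype.sum_bool]
        simp only [hci]
        cases labb m S σ v <;> simp
  rw [Finset.sum_congr rfl fun S _ => hS S, Finset.sum_const, Finset.card_univ]
  rw [Fintype.card_finset, Fintype.card_fin, nsmul_eq_mul]
  norm_num
-- ### The union bound for bad position sequences

/-- GF(2) vector of a sample position (0 at ⊥). -/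
def wz (m : ℕ) : Cube m → (Fin m → ZMod 2) := fun c => c.elim 0 (vecz m)

/-- position sequence has a zero-sum over `y` inside the cube -/
def Dep (m n : ℕ) (y : Finset (Fin n)) (x : Fin n → Cube m) : Prop :=
  (∀ i ∈ y, x i ≠ none) ∧ (∑ i ∈ y, wz m (x i)) = 0

noncomputable instance instDecDep (n : ℕ) (y : Finset (Fin n)) (x : Fin n → Cube m) :
    Decidable (Dep m n y x) := Classical.propDecidable _

/-- option-extended character (0 at ⊥) -/
def gOpt (m : ℕ) (S : Finset (Fin m)) : Cube m → ℝ := fun c => c.elim 0 (chi m S)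

lemma parity_prod {α : Type*} [DecidableEq α] (y : Finset α) (b : α → Bool) :
    ∏ i ∈ y, (if b i then (-1:ℝ) else 1)
      = if (∑ i ∈ y, (if b i then (1:ZMod 2) else 0)) = 0 then 1 else -1 := by
  classical
  refine Finset.induction_on y (by simp) ?_
  intro a s0 ha ih
  rw [Finset.prod_insert ha, Finset.sum_insert ha, ih]
  cases hb : b a
  · simp
  · rw [if_pos rfl, if_pos rfl]
    rcases zmod2_cases (∑ i ∈ s0, if b i then (1:ZMod 2) else 0) with h0 | h1
    · rw [h0, if_pos rfl, if_neg (by decide)]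
      norm_num
    · rw [h1, if_neg (by decide), if_pos (by decide)]
      norm_num

lemma sum_S_prod_chi {n : ℕ} (y : Finset (Fin n)) (u : Fin n → Vtx m) :
    ∑ S : Finset (Fin m), ∏ i ∈ y, chi m S (u i)
      = if (∑ i ∈ y, vecz m (u i)) = 0 then (2^m : ℝ) else 0 := by
  classical
  have h1 : ∀ S : Finset (Fin m), ∏ i ∈ y, chi m S (u i)
      = ∏ j ∈ S, ∏ i ∈ y, (if u i j then (-1:ℝ) else 1) := by
    intro S
    rw [Finset.prod_congr rfl fun i _ => chi_eq_prod S (u i), Finset.prod_comm]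
  rw [Finset.sum_congr rfl fun S _ => h1 S]
  have hexp := Finset.prod_add (fun j : Fin m => ∏ i ∈ y, (if u i j then (-1:ℝ) else 1))
      (fun _ : Fin m => (1:ℝ)) Finset.univ
  simp only [Finset.prod_const_one, mul_one, Finset.powerset_univ] at hexp
  rw [← hexp]
  have heps : ∀ j : Fin m, (∏ i ∈ y, (if u i j then (-1:ℝ) else 1)) + 1
      = if (∑ i ∈ y, vecz m (u i)) j = 0 then 2 else 0 := by
    intro j
    rw [parity_prod]
    have hz : (∑ i ∈ y, vecz m (u i)) j = ∑ i ∈ y, (if u i j then (1:ZMod 2) else 0) := by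
      rw [Finset.sum_apply]
      rfl
    rw [hz]
    by_cases h : (∑ i ∈ y, if u i j then (1:ZMod 2) else 0) = 0
    · rw [if_pos h, if_pos h]; norm_num
    · rw [if_neg h, if_neg h]; norm_num
  rw [Finset.prod_congr rfl fun j _ => heps j]
  by_cases hz : (∑ i ∈ y, vecz m (u i)) = 0
  · rw [if_pos hz]
    have h2 : ∀ j : Fin m, (if (∑ i ∈ y, vecz m (u i)) j = 0 then (2:ℝ) else 0) = 2 := by
      intro j; rw [if_pos (by rw [hz]; rfl)]
    rw [Finset.prod_congr rfl fun j _ => h2 j, Finset.prod_const]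
    simp
  · rw [if_neg hz]
    obtain ⟨j0, hj0⟩ : ∃ j, (∑ i ∈ y, vecz m (u i)) j ≠ 0 := by
      by_contra h
      push_neg at h
      exact hz (funext h)
    exact Finset.prod_eq_zero (Finset.mem_univ j0) (by rw [if_neg hj0])

lemma dep_indicator {n : ℕ} (y : Finset (Fin n)) (x : Fin n → Cube m) :
    (if Dep m n y x then (1:ℝ) else 0)
      = ((2:ℝ)^m)⁻¹ * ∑ S : Finset (Fin m), ∏ i ∈ y, gOpt m S (x i) := by
  classical
  by_cases hall : ∀ i ∈ y, x i ≠ none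
  · set u : Fin n → Vtx m := fun i => (x i).getD (fun _ => false) with hu
    have hx : ∀ i ∈ y, x i = some (u i) := by
      intro i hi
      cases hxi : x i with
      | none => exact absurd hxi (hall i hi)
      | some v => rw [hu]; simp only [hxi]; rfl
    have hg : ∀ S : Finset (Fin m), ∏ i ∈ y, gOpt m S (x i) = ∏ i ∈ y, chi m S (u i) := by
      intro S
      refine Finset.prod_congr rfl fun i hi => ?_
      rw [gOpt, hx i hi]
      exact rfl
    rw [Finset.sum_congr rfl fun S _ => hg S, sum_S_prod_chi]
    have hdep : Dep m n y x ↔ (∑ i ∈ y, vecz m (u i)) = 0 := by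
      have hwz : ∑ i ∈ y, wz m (x i) = ∑ i ∈ y, vecz m (u i) :=
        Finset.sum_congr rfl fun i hi => by rw [wz, hx i hi]; exact rfl
      constructor
      · rintro ⟨-, h2⟩; rw [← hwz]; exact h2
      · intro h; exact ⟨hall, by rw [hwz]; exact h⟩
    by_cases hd : Dep m n y x
    · rw [if_pos hd, if_pos (hdep.1 hd)]
      rw [inv_mul_cancel₀ (by positivity)]
    · rw [if_neg hd, if_neg (fun hh => hd (hdep.2 hh)), mul_zero]
  · push_neg at hall
    obtain ⟨i0, hi0, hnone⟩ := hall
    have hzero : ∀ S : Finset (Fin m), ∏ i ∈ y, gOpt m S (x i) = 0 := fun S =>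
      Finset.prod_eq_zero hi0 (by rw [hnone]; rfl)
    rw [if_neg (fun hd => hd.1 i0 hi0 hnone)]
    rw [Finset.sum_congr rfl fun S _ => hzero S, Finset.sum_const_zero, mul_zero]

lemma toReal_sum_cubeDist (m : ℕ) : ∑ c : Cube m, (cubeDist m c).toReal = 1 := by
  rw [Fintype.sum_option, toReal_cubeDist_none]
  rw [Finset.sum_congr rfl fun v _ => toReal_cubeDist_some v]
  rw [Finset.sum_const, Finset.card_univ, card_vtx, nsmul_eq_mul]
  have h2 : (0:ℝ) < (2:ℝ)^m := by positivity
  push_cast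
  field_simp
  ring

lemma per_y {n : ℕ} (y : Finset (Fin n)) (hy : y.Nonempty) :
    ∑ x : Fin n → Cube m, (∏ i, (cubeDist m (x i)).toReal) * (if Dep m n y x then 1 else 0)
      ≤ ((2:ℝ)^m)⁻¹ := by
  classical
  have hid : ∀ x : Fin n → Cube m,
      (∏ i, (cubeDist m (x i)).toReal) * (if Dep m n y x then (1:ℝ) else 0)
      = ((2:ℝ)^m)⁻¹ * ∑ S : Finset (Fin m),
          ∏ i, ((cubeDist m (x i)).toReal * (if i ∈ y then gOpt m S (x i) else 1)) := by
    intro x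
    rw [dep_indicator y x, ← mul_assoc,
      mul_comm (∏ i : Fin n, (cubeDist m (x i)).toReal) (((2:ℝ)^m)⁻¹), mul_assoc,
      Finset.mul_sum]
    refine congrArg _ (Finset.sum_congr rfl fun S _ => ?_)
    have hext : ∏ i ∈ y, gOpt m S (x i)
        = ∏ i : Fin n, (if i ∈ y then gOpt m S (x i) else 1) := by
      rw [Finset.prod_ite_mem, Finset.univ_inter]
    rw [hext, ← Finset.prod_mul_distrib]
  rw [Finset.sum_congr rfl fun x _ => hid x, ← Finset.mul_sum, Finset.sum_comm]
  have hfact : ∀ S : Finset (Fin m),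
      ∑ x : Fin n → Cube m, ∏ i, ((cubeDist m (x i)).toReal * (if i ∈ y then gOpt m S (x i) else 1))
      = ∏ i : Fin n, ∑ c : Cube m, ((cubeDist m c).toReal * (if i ∈ y then gOpt m S c else 1)) := by
    intro S
    have h : ∑ x ∈ Fintype.piFinset (fun _ : Fin n => (Finset.univ : Finset (Cube m))),
        ∏ i, ((cubeDist m (x i)).toReal * (if i ∈ y then gOpt m S (x i) else 1))
        = ∏ i : Fin n, ∑ c : Cube m, ((cubeDist m c).toReal * (if i ∈ y then gOpt m S c else 1)) :=
      (Finset.prod_univ_sum (fun _ : Fin n => (Finset.univ : Finset (Cube m)))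
        (fun i c => (cubeDist m c).toReal * (if i ∈ y then gOpt m S c else 1))).symm
    rw [Fintype.piFinset_univ] at h
    exact h
  rw [Finset.sum_congr rfl fun S _ => hfact S]
  have hcoord : ∀ (S : Finset (Fin m)) (i : Fin n),
      (∑ c : Cube m, ((cubeDist m c).toReal * (if i ∈ y then gOpt m S c else 1)))
      = if i ∈ y then (if S = ∅ then 2/3 else 0) else 1 := by
    intro S i
    by_cases hiy : i ∈ y
    · rw [if_pos hiy]
      have h1 : ∀ c : Cube m, (cubeDist m c).toReal * (if i ∈ y then gOpt m S c else 1)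
          = (cubeDist m c).toReal * gOpt m S c := fun c => by rw [if_pos hiy]
      rw [Finset.sum_congr rfl fun c _ => h1 c, Fintype.sum_option]
      have h2 : (cubeDist m (none : Cube m)).toReal * gOpt m S none = 0 := by
        rw [gOpt]; simp
      have h3 : ∀ v : Vtx m, (cubeDist m (some v)).toReal * gOpt m S (some v)
          = 2/3 * ((2:ℝ)^m)⁻¹ * chi m S v := by
        intro v; rw [toReal_cubeDist_some, gOpt]; exact rfl
      rw [h2, zero_add, Finset.sum_congr rfl fun v _ => h3 v, ← Finset.mul_sum, sum_chi]
      have h4 : (0:ℝ) < (2:ℝ)^m := by positivity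
      by_cases hS : S = ∅ <;> simp only [hS, if_true, if_false, reduceIte] <;>
        first
          | (field_simp; ring)
          | (field_simp)
          | (rw [mul_zero])
    · rw [if_neg hiy]
      have h1 : ∀ c : Cube m, (cubeDist m c).toReal * (if i ∈ y then gOpt m S c else 1)
          = (cubeDist m c).toReal := fun c => by rw [if_neg hiy, mul_one]
      rw [Finset.sum_congr rfl fun c _ => h1 c, toReal_sum_cubeDist]
  rw [Finset.sum_congr rfl fun S _ =>
    Finset.prod_congr rfl fun i _ => hcoord S i]
  rw [Finset.sum_eq_single (∅ : Finset (Fin m))]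
  · have hle : ∏ i : Fin n, (if i ∈ y then (if (∅:Finset (Fin m)) = ∅ then (2:ℝ)/3 else 0) else 1) ≤ 1 := by
      apply Finset.prod_le_one
      · intro i _; by_cases h : i ∈ y <;> simp [h] <;> norm_num
      · intro i _; by_cases h : i ∈ y <;> simp [h] <;> norm_num
    have h4 : (0:ℝ) < ((2:ℝ)^m)⁻¹ := by positivity
    calc ((2:ℝ)^m)⁻¹ * ∏ i : Fin n, (if i ∈ y then (if (∅:Finset (Fin m)) = ∅ then (2:ℝ)/3 else 0) else 1)
        ≤ ((2:ℝ)^m)⁻¹ * 1 := by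
          apply mul_le_mul_of_nonneg_left hle (le_of_lt h4)
      _ = ((2:ℝ)^m)⁻¹ := mul_one _
  · intro S _ hS
    obtain ⟨i0, hi0⟩ := hy
    apply Finset.prod_eq_zero (Finset.mem_univ i0)
    rw [if_pos hi0, if_neg hS]
  · intro h
    exact absurd (Finset.mem_univ ∅) h
-- ### union bound, in extended nonnegative reals

lemma cubeDist_ne_top (c : Cube m) : cubeDist m c ≠ ⊤ := PMF.apply_ne_top _ _

lemma prod_cubeDist_eq_ofReal {n : ℕ} (x : Fin n → Cube m) :
    ∏ i, cubeDist m (x i) = ENNReal.ofReal (∏ i, (cubeDist m (x i)).toReal) := by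
  rw [← ENNReal.toReal_prod]
  rw [ENNReal.ofReal_toReal]
  exact (ENNReal.prod_lt_top fun i _ => (cubeDist_ne_top (x i)).lt_top).ne

lemma ofReal_inv_two_pow (m : ℕ) : ENNReal.ofReal (((2:ℝ)^m)⁻¹) = (2^m : ℝ≥0∞)⁻¹ := by
  rw [ENNReal.ofReal_inv_of_pos (by positivity)]
  congr 1
  rw [ENNReal.ofReal_pow (by norm_num)]
  norm_num

lemma per_y_ennreal {n : ℕ} (y : Finset (Fin n)) (hy : y.Nonempty) :
    ∑ x : Fin n → Cube m, (∏ i, cubeDist m (x i)) * (if Dep m n y x then (1:ℝ≥0∞) else 0)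
      ≤ (2^m : ℝ≥0∞)⁻¹ := by
  classical
  have hterm : ∀ x : Fin n → Cube m,
      (∏ i, cubeDist m (x i)) * (if Dep m n y x then (1:ℝ≥0∞) else 0)
      = ENNReal.ofReal ((∏ i, (cubeDist m (x i)).toReal) * (if Dep m n y x then (1:ℝ) else 0)) := by
    intro x
    by_cases hd : Dep m n y x
    · rw [if_pos hd, if_pos hd, mul_one, mul_one, prod_cubeDist_eq_ofReal]
    · rw [if_neg hd, if_neg hd, mul_zero, mul_zero, ENNReal.ofReal_zero]
  rw [Finset.sum_congr rfl fun x _ => hterm x]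
  rw [← ENNReal.ofReal_sum_of_nonneg (fun x _ => by positivity)]
  rw [← ofReal_inv_two_pow]
  exact ENNReal.ofReal_le_ofReal (per_y y hy)

lemma union_bound {n : ℕ} :
    ∑ x : Fin n → Cube m, (∏ i, cubeDist m (x i)) * (if BadX m n x then (1:ℝ≥0∞) else 0)
      ≤ 2^n * (2^m : ℝ≥0∞)⁻¹ := by
  classical
  have hpt : ∀ x : Fin n → Cube m, (if BadX m n x then (1:ℝ≥0∞) else 0)
      ≤ ∑ y ∈ Finset.univ.filter (fun y : Finset (Fin n) => Odd y.card),
          (if Dep m n y x then (1:ℝ≥0∞) else 0) := by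
    intro x
    by_cases hb : BadX m n x
    · rw [if_pos hb]
      obtain ⟨y, hodd, u, hxu, hsum⟩ := hb
      have hdep : Dep m n y x := by
        constructor
        · intro i hi; rw [hxu i hi]; simp
        · rw [← hsum]
          exact Finset.sum_congr rfl fun i hi => by rw [wz, hxu i hi]; exact rfl
      calc (1:ℝ≥0∞) = if Dep m n y x then 1 else 0 := by rw [if_pos hdep]
        _ ≤ ∑ y' ∈ Finset.univ.filter (fun y' : Finset (Fin n) => Odd y'.card),
              (if Dep m n y' x then (1:ℝ≥0∞) else 0) :=
          Finset.single_le_sum (f := fun y' => if Dep m n y' x then (1:ℝ≥0∞) else 0)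
            (fun _ _ => zero_le) (Finset.mem_filter.2 ⟨Finset.mem_univ y, hodd⟩)
    · rw [if_neg hb]; exact zero_le
  calc ∑ x : Fin n → Cube m, (∏ i, cubeDist m (x i)) * (if BadX m n x then (1:ℝ≥0∞) else 0)
      ≤ ∑ x : Fin n → Cube m, ∑ y ∈ Finset.univ.filter (fun y : Finset (Fin n) => Odd y.card),
          (∏ i, cubeDist m (x i)) * (if Dep m n y x then (1:ℝ≥0∞) else 0) := by
        refine Finset.sum_le_sum fun x _ => ?_
        rw [← Finset.mul_sum]
        exact mul_le_mul_right (hpt x) _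
    _ = ∑ y ∈ Finset.univ.filter (fun y : Finset (Fin n) => Odd y.card),
          ∑ x : Fin n → Cube m,
          (∏ i, cubeDist m (x i)) * (if Dep m n y x then (1:ℝ≥0∞) else 0) := Finset.sum_comm
    _ ≤ ∑ y ∈ Finset.univ.filter (fun y : Finset (Fin n) => Odd y.card), (2^m : ℝ≥0∞)⁻¹ := by
        refine Finset.sum_le_sum fun y hy => ?_
        have hodd : Odd y.card := (Finset.mem_filter.1 hy).2
        have hne : y.Nonempty := by
          rw [← Finset.card_pos]
          refine Nat.pos_of_ne_zero fun h => ?_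
          rw [h] at hodd
          exact (Nat.not_odd_iff_even.2 Even.zero) hodd
        exact per_y_ennreal y hne
    _ ≤ 2^n * (2^m : ℝ≥0∞)⁻¹ := by
        rw [Finset.sum_const, nsmul_eq_mul]
        apply mul_le_mul_left
        calc ((Finset.univ.filter (fun y : Finset (Fin n) => Odd y.card)).card : ℝ≥0∞)
            ≤ ((Finset.univ : Finset (Finset (Fin n))).card : ℝ≥0∞) :=
              Nat.cast_le.2 (Finset.card_filter_le _ _)
          _ = 2^n := by
              rw [Finset.card_univ, Fintype.card_finset, Fintype.card_fin]
              push_cast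
              ring
-- ### Assembling the main counting inequality

lemma ennreal_third : (1/6 : ℝ≥0∞) * 2 = 1/3 := by
  have h6 : (6:ℝ≥0∞) = 3 * 2 := by norm_num
  rw [one_div, one_div, h6, ENNReal.mul_inv (Or.inl (by norm_num)) (Or.inl (by norm_num)),
    mul_assoc, ENNReal.inv_mul_cancel (by norm_num) (by norm_num), mul_one]

lemma base_mul_two {n : ℕ} (x : Fin n → Cube m) :
    (∏ i, baseW m (x i)) * ∏ i, (if x i = none then (2:ℝ≥0∞) else 1)
      = ∏ i, cubeDist m (x i) := by
  classical
  rw [← Finset.prod_mul_distrib]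
  refine Finset.prod_congr rfl fun i _ => ?_
  cases hxi : x i with
  | none =>
      rw [if_pos rfl, cubeDist_none]
      have hb : baseW m none = 1/6 := rfl
      rw [hb]
      exact ennreal_third
  | some v =>
      rw [if_neg (by simp), mul_one, cubeDist_some]
      rfl

lemma sum_BW_CC {n : ℕ} (σ : Bool) :
    ∑ s : Samp m n, BW m n s * (CC m n σ s : ℝ≥0∞) = 2^m := by
  classical
  have hcast : ∀ s : Samp m n, (CC m n σ s : ℝ≥0∞)
      = ∑ S : Finset (Fin m), (if ∀ i, Ci m S σ (s i) then (1:ℝ≥0∞) else 0) := by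
    intro s
    rw [CC, Finset.card_filter, Nat.cast_sum]
    exact Finset.sum_congr rfl fun S _ => by
      by_cases h : ∀ i, Ci m S σ (s i) <;> simp [h]
  calc ∑ s : Samp m n, BW m n s * (CC m n σ s : ℝ≥0∞)
      = ∑ s : Samp m n, ∑ S : Finset (Fin m),
          BW m n s * (if ∀ i, Ci m S σ (s i) then (1:ℝ≥0∞) else 0) := by
        exact Finset.sum_congr rfl fun s _ => by rw [hcast s, Finset.mul_sum]
    _ = ∑ S : Finset (Fin m), ∑ s : Samp m n,
          BW m n s * (if ∀ i, Ci m S σ (s i) then (1:ℝ≥0∞) else 0) := Finset.sum_comm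
    _ = ∑ _S : Finset (Fin m), (1:ℝ≥0∞) :=
        Finset.sum_congr rfl fun S _ => sum_iid_tgt n S σ
    _ = 2^m := by
        rw [Finset.sum_const, Finset.card_univ, Fintype.card_finset, Fintype.card_fin,
          nsmul_eq_mul, mul_one]
        push_cast
        ring

lemma sum_BW_bad {n : ℕ} :
    ∑ s : Samp m n, BW m n s *
        (if BadX m n (fun i => (s i).1) then (CC m n false s : ℝ≥0∞) else 0)
      ≤ 2^n := by
  classical
  have h2ne0 : ((2:ℝ≥0∞)^m) ≠ 0 := pow_ne_zero _ (by norm_num)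
  have h2netop : ((2:ℝ≥0∞)^m) ≠ ⊤ := ENNReal.pow_ne_top ENNReal.ofNat_ne_top
  have hinner : ∀ x : Fin n → Cube m,
      ∑ o : Fin n → Bool, BW m n (fun i => (x i, o i)) *
        (if BadX m n x then (CC m n false (fun i => (x i, o i)) : ℝ≥0∞) else 0)
      = 2^m * ((∏ i, cubeDist m (x i)) * (if BadX m n x then (1:ℝ≥0∞) else 0)) := by
    intro x
    by_cases hb : BadX m n x
    · simp only [if_pos hb, mul_one]
      have hBW : ∀ o : Fin n → Bool, BW m n (fun i => (x i, o i))
          = ∏ i, baseW m (x i) := fun o => rfl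
      calc ∑ o : Fin n → Bool, BW m n (fun i => (x i, o i)) *
              (CC m n false (fun i => (x i, o i)) : ℝ≥0∞)
          = (∏ i, baseW m (x i)) *
              ∑ o : Fin n → Bool, (CC m n false (fun i => (x i, o i)) : ℝ≥0∞) := by
            rw [Finset.mul_sum]
            exact Finset.sum_congr rfl fun o _ => by rw [hBW o]
        _ = (∏ i, baseW m (x i)) * (2^m * ∏ i, (if x i = none then (2:ℝ≥0∞) else 1)) := by
            rw [sum_o_CC]
        _ = 2^m * ((∏ i, baseW m (x i)) * ∏ i, (if x i = none then (2:ℝ≥0∞) else 1)) := by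
            ring
        _ = 2^m * ∏ i, cubeDist m (x i) := by rw [base_mul_two]
    · simp only [if_neg hb, mul_zero, Finset.sum_const_zero]
  calc ∑ s : Samp m n, BW m n s *
          (if BadX m n (fun i => (s i).1) then (CC m n false s : ℝ≥0∞) else 0)
      = ∑ x : Fin n → Cube m, ∑ o : Fin n → Bool, BW m n (fun i => (x i, o i)) *
          (if BadX m n x then (CC m n false (fun i => (x i, o i)) : ℝ≥0∞) else 0) :=
        sum_samp_split _
    _ = ∑ x : Fin n → Cube m,
          2^m * ((∏ i, cubeDist m (x i)) * (if BadX m n x then (1:ℝ≥0∞) else 0)) :=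
        Finset.sum_congr rfl fun x _ => hinner x
    _ = 2^m * ∑ x : Fin n → Cube m,
          (∏ i, cubeDist m (x i)) * (if BadX m n x then (1:ℝ≥0∞) else 0) := by
        rw [Finset.mul_sum]
    _ ≤ 2^m * (2^n * (2^m : ℝ≥0∞)⁻¹) := mul_le_mul_right union_bound _
    _ = 2^n * ((2^m : ℝ≥0∞) * (2^m : ℝ≥0∞)⁻¹) := by ring
    _ = 2^n := by rw [ENNReal.mul_inv_cancel h2ne0 h2netop, mul_one]

lemma max_le_split {n : ℕ} (s : Samp m n) :
    ((max (CC m n true s) (CC m n false s) : ℕ) : ℝ≥0∞)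
      ≤ (CC m n true s : ℝ≥0∞)
        + (if BadX m n (fun i => (s i).1) then (CC m n false s : ℝ≥0∞) else 0) := by
  by_cases hb : BadX m n (fun i => (s i).1)
  · rw [if_pos hb, ← Nat.cast_add]
    exact Nat.cast_le.2 (max_le (Nat.le_add_right _ _) (Nat.le_add_left _ _))
  · rw [if_neg hb, add_zero, ← CC_flip hb, max_self]

end Dev

/-- with `P = {p₁,p₂}`, `D` the parity distinguishers, and `μ` as above, the
distribution-specific agnostic OI sample complexity satisfies
`SAMP-DS-A(P, D, 1/8, 1/3, μ) ≥ m − 20`: any `n`-sample agnostic learner has `n ≥ m − 20`. -/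
theorem statement_17 (m : ℕ) (hm : 0 < m) (n : ℕ) (A : Learner (Cube m) n)
    (hA : DSAL (cubeDist m) {pLow m, pHigh m} (parityClass m) (1 / 8) (1 / 3) n A) :
    (m : ℝ) - 20 ≤ (n : ℝ) := by
  classical
  have hsucc : ∀ (S : Finset (Fin m)) (σ : Bool),
      ENNReal.ofReal (2/3) ≤ ∑ s : Samp m n,
        BW m n s * ((if ∀ i, Ci m S σ (s i) then (1:ℝ≥0∞) else 0)
          * OI.prob (A s) (GD m S σ)) := by
    intro S σ
    have h1 := hA (tgt m S σ) (tgt_pred S σ)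
    rw [AchievesAg] at h1
    rw [show (1 - 1/3 : ℝ) = 2/3 by norm_num] at h1
    refine le_trans h1 (le_of_eq ?_)
    rw [outDist, OI.prob, PMF.toOuterMeasure_bind_apply, tsum_fintype]
    refine Finset.sum_congr rfl fun s _ => ?_
    rw [iid_tgt n S σ s, mul_assoc]
    rfl
  have hsum : ENNReal.ofReal (2/3) * (2^m * 2) ≤ 2^m + 2^n + 64 * 2^n := by
    calc ENNReal.ofReal (2/3) * (2^m * 2)
        = ∑ S : Finset (Fin m), ∑ _σ : Bool, ENNReal.ofReal (2/3) := by
          simp only [Finset.sum_const, Finset.card_univ, Fintype.card_bool,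
            Fintype.card_finset, Fintype.card_fin, nsmul_eq_mul]
          push_cast
          ring
      _ ≤ ∑ S : Finset (Fin m), ∑ σ : Bool, ∑ s : Samp m n,
            BW m n s * ((if ∀ i, Ci m S σ (s i) then (1:ℝ≥0∞) else 0)
              * OI.prob (A s) (GD m S σ)) :=
          Finset.sum_le_sum fun S _ => Finset.sum_le_sum fun σ _ => hsucc S σ
      _ = ∑ s : Samp m n, ∑ S : Finset (Fin m), ∑ σ : Bool,
            BW m n s * ((if ∀ i, Ci m S σ (s i) then (1:ℝ≥0∞) else 0)
              * OI.prob (A s) (GD m S σ)) := by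
          rw [Finset.sum_congr rfl fun S (_ : S ∈ Finset.univ) => Finset.sum_comm]
          exact Finset.sum_comm
      _ = ∑ s : Samp m n, BW m n s * (∑ S : Finset (Fin m), ∑ σ : Bool,
            ((if ∀ i, Ci m S σ (s i) then (1:ℝ≥0∞) else 0)
              * OI.prob (A s) (GD m S σ))) := by
          refine Finset.sum_congr rfl fun s _ => ?_
          rw [Finset.mul_sum]
          exact Finset.sum_congr rfl fun S _ => by rw [Finset.mul_sum]
      _ ≤ ∑ s : Samp m n, BW m n s *
            (((max (CC m n true s) (CC m n false s) : ℕ) : ℝ≥0∞) + 64) :=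
          Finset.sum_le_sum fun s _ => mul_le_mul_right (inner_bound A s) _
      _ ≤ ∑ s : Samp m n, BW m n s *
            (((CC m n true s : ℝ≥0∞)
              + (if BadX m n (fun i => (s i).1) then (CC m n false s : ℝ≥0∞) else 0)) + 64) :=
          Finset.sum_le_sum fun s _ =>
            mul_le_mul_right (add_le_add_left (max_le_split s) _) _
      _ = (∑ s : Samp m n, BW m n s * (CC m n true s : ℝ≥0∞))
            + (∑ s : Samp m n, BW m n s *
              (if BadX m n (fun i => (s i).1) then (CC m n false s : ℝ≥0∞) else 0))
            + 64 * ∑ s : Samp m n, BW m n s := by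
          rw [Finset.mul_sum, ← Finset.sum_add_distrib, ← Finset.sum_add_distrib]
          refine Finset.sum_congr rfl fun s _ => ?_
          ring
      _ ≤ 2^m + 2^n + 64 * 2^n := by
          refine add_le_add (add_le_add (le_of_eq (sum_BW_CC true)) sum_BW_bad) ?_
          exact mul_le_mul_right (sum_BW_le n) _
  -- convert to a real inequality
  have hfin : ((2:ℝ≥0∞)^m + 2^n + 64 * 2^n) ≠ ⊤ := by
    refine ENNReal.add_ne_top.2 ⟨ENNReal.add_ne_top.2 ⟨?_, ?_⟩, ?_⟩
    · exact ENNReal.pow_ne_top ENNReal.ofNat_ne_top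
    · exact ENNReal.pow_ne_top ENNReal.ofNat_ne_top
    · exact ENNReal.mul_ne_top (by norm_num) (ENNReal.pow_ne_top ENNReal.ofNat_ne_top)
  have hreal := ENNReal.toReal_mono hfin hsum
  have hL : (ENNReal.ofReal (2/3) * ((2:ℝ≥0∞)^m * 2)).toReal = (2/3) * ((2:ℝ)^m * 2) := by
    rw [ENNReal.toReal_mul, ENNReal.toReal_mul, ENNReal.toReal_pow,
      ENNReal.toReal_ofReal (by norm_num)]
    norm_num
  have hR : ((2:ℝ≥0∞)^m + 2^n + 64 * 2^n).toReal = (2:ℝ)^m + 2^n + 64 * 2^n := by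
    rw [ENNReal.toReal_add (ENNReal.add_ne_top.2 ⟨ENNReal.pow_ne_top ENNReal.ofNat_ne_top,
        ENNReal.pow_ne_top ENNReal.ofNat_ne_top⟩)
        (ENNReal.mul_ne_top (by norm_num) (ENNReal.pow_ne_top ENNReal.ofNat_ne_top)),
      ENNReal.toReal_add (ENNReal.pow_ne_top ENNReal.ofNat_ne_top)
        (ENNReal.pow_ne_top ENNReal.ofNat_ne_top),
      ENNReal.toReal_mul, ENNReal.toReal_pow, ENNReal.toReal_pow]
    norm_num
  rw [hL, hR] at hreal
  -- 2^m ≤ 195 * 2^n ≤ 2^(n+8)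
  have hpow : (2:ℝ)^m ≤ 2^(n+8) := by
    have hbpos : (0:ℝ) < 2^n := by positivity
    rw [pow_add]
    nlinarith [hreal, hbpos]
  have hmn : m ≤ n + 8 := by
    have := (pow_le_pow_iff_right₀ (a := (2:ℝ)) (by norm_num)).1 hpow
    exact this
  have : (m:ℝ) ≤ (n:ℝ) + 8 := by exact_mod_cast hmn
  linarith
end
end

section
/- Let μ be the uniform distribution over a finite set X of size n ≥ 1. Then for all ε ∈ (0, 1/e), log N_{μ,[−1,1]^X}([−1,1]^X, ε) ≥ n · log(1/(eε)), where e is the base of the natural logarithm. -/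
open scoped ENNReal Pointwise

noncomputable section

open OI MeasureTheory Finset

namespace OIProof

variable {X : Type} [Fintype X] [Nonempty X]

lemma pexp_uniform (f : X → ℝ) :
    pexp (PMF.uniformOfFintype X) f = (∑ x, f x) / (Fintype.card X : ℝ) := by
  rw [pexp, tsum_fintype]
  simp only [PMF.uniformOfFintype_apply, ENNReal.toReal_inv, ENNReal.toReal_natCast]
  rw [Finset.sum_div]
  exact Finset.sum_congr rfl fun x _ => by rw [div_eq_inv_mul]

lemma dnorm_uniform (f : X → ℝ) :
    dnorm (PMF.uniformOfFintype X) {d : X → ℝ | Dist1 d} f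
      = (∑ x, |f x|) / (Fintype.card X : ℝ) := by
  set N : ℝ := (Fintype.card X : ℝ) with hN
  have hNpos : (0:ℝ) < N := by
    rw [hN]; exact_mod_cast Fintype.card_pos (α := X)
  set sgn : X → ℝ := fun x => if 0 ≤ f x then 1 else -1 with hsgn
  have hsgnD : sgn ∈ {d : X → ℝ | Dist1 d} := by
    intro x
    by_cases h : 0 ≤ f x <;> simp [hsgn, h]
  have hmulsgn : ∀ x, f x * sgn x = |f x| := by
    intro x
    by_cases h : 0 ≤ f x
    · simp [hsgn, h, abs_of_nonneg h]
    · simp [hsgn, h, abs_of_neg (lt_of_not_ge h)]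
  have hinnsgn : inn (PMF.uniformOfFintype X) f sgn = (∑ x, |f x|) / N := by
    rw [inn, pexp_uniform]
    simp_rw [hmulsgn]
    rfl
  have hbound : ∀ g ∈ {d : X → ℝ | Dist1 d},
      |inn (PMF.uniformOfFintype X) f g| ≤ (∑ x, |f x|) / N := by
    intro g hg
    rw [inn, pexp_uniform, abs_div, abs_of_pos hNpos, div_le_div_iff_of_pos_right hNpos]
    calc |∑ x, f x * g x| ≤ ∑ x, |f x * g x| := Finset.abs_sum_le_sum_abs _ _
      _ ≤ ∑ x, |f x| := by
          refine Finset.sum_le_sum fun x _ => ?_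
          rw [abs_mul]
          have := hg x
          have hgx : |g x| ≤ 1 := abs_le.mpr ⟨this.1, this.2⟩
          calc |f x| * |g x| ≤ |f x| * 1 := by
                exact mul_le_mul_of_nonneg_left hgx (abs_nonneg _)
            _ = |f x| := mul_one _
  apply le_antisymm
  · apply csSup_le
    · exact ⟨_, ⟨sgn, hsgnD, rfl⟩⟩
    · rintro y ⟨g, hg, rfl⟩
      exact hbound g hg
  · have : (∑ x, |f x|) / N = |inn (PMF.uniformOfFintype X) f sgn| := by
      rw [hinnsgn, abs_of_nonneg]
      positivity
    rw [this]
    apply le_csSup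
    · exact ⟨(∑ x, |f x|) / N, by rintro y ⟨g, hg, rfl⟩; exact hbound g hg⟩
    · exact ⟨sgn, hsgnD, rfl⟩
lemma exists_finite_cover {ε : ℝ} (hε : 0 < ε) :
    ∃ C : Set (X → ℝ), IsCover (PMF.uniformOfFintype X)
      {d : X → ℝ | Dist1 d} {d : X → ℝ | Dist1 d} ε C ∧ C.Finite := by
  classical
  set rnd : ℝ → ℝ := fun y => -1 + (⌊(y + 1) / ε⌋₊ : ℝ) * ε with hrnd
  have hrnd_le : ∀ y : ℝ, -1 ≤ y → rnd y ≤ y := by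
    intro y hy
    have h0 : (0:ℝ) ≤ (y + 1) / ε := div_nonneg (by linarith) hε.le
    have := Nat.floor_le h0
    have : (⌊(y + 1) / ε⌋₊ : ℝ) * ε ≤ (y + 1) / ε * ε :=
      mul_le_mul_of_nonneg_right this hε.le
    rw [div_mul_cancel₀ _ hε.ne'] at this
    simp [hrnd]; linarith
  have hrnd_ge : ∀ y : ℝ, -1 ≤ y → -1 ≤ rnd y := by
    intro y hy
    have : (0:ℝ) ≤ (⌊(y + 1) / ε⌋₊ : ℝ) * ε := by positivity
    simp [hrnd]; linarith
  have hrnd_close : ∀ y : ℝ, -1 ≤ y → y - rnd y ≤ ε := by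
    intro y hy
    have h0 : (0:ℝ) ≤ (y + 1) / ε := div_nonneg (by linarith) hε.le
    have := Nat.lt_floor_add_one ((y + 1) / ε)
    have h2 : y + 1 < ((⌊(y + 1) / ε⌋₊ : ℝ) + 1) * ε := by
      have := mul_lt_mul_of_pos_right this hε
      rwa [div_mul_cancel₀ _ hε.ne'] at this
    simp only [hrnd]
    nlinarith
  set C : Set (X → ℝ) := (fun g : X → ℝ => fun x => rnd (g x)) '' {d : X → ℝ | Dist1 d}
    with hC
  have hCsub : C ⊆ {d : X → ℝ | Dist1 d} := by
    rintro _ ⟨g, hg, rfl⟩ x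
    have h1 := (hg x).1
    have h2 := (hg x).2
    exact ⟨hrnd_ge _ h1, le_trans (hrnd_le _ h1) h2⟩
  refine ⟨C, ⟨hCsub, ?_⟩, ?_⟩
  · intro g hg
    refine ⟨fun x => rnd (g x), ⟨g, hg, rfl⟩, ?_⟩
    rw [OIProof.dnorm_uniform]
    have hterm : ∀ x, |(g - fun x => rnd (g x)) x| ≤ ε := by
      intro x
      have h1 := (hg x).1
      simp only [Pi.sub_apply]
      rw [abs_of_nonneg (by linarith [hrnd_le (g x) h1])]
      exact hrnd_close _ h1
    have hcard : (0:ℝ) < (Fintype.card X : ℝ) := by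
      exact_mod_cast Fintype.card_pos
    rw [div_le_iff₀ hcard]
    calc (∑ x, |(g - fun x => rnd (g x)) x|) ≤ ∑ _x : X, ε :=
          Finset.sum_le_sum fun x _ => hterm x
      _ = ε * (Fintype.card X : ℝ) := by
          rw [Finset.sum_const, Finset.card_univ, nsmul_eq_mul, mul_comm]
  · have hT : (Set.Iic ⌈2 / ε⌉₊).Finite := Set.finite_Iic _
    have hTim : ((fun k : ℕ => -1 + (k : ℝ) * ε) '' Set.Iic ⌈2 / ε⌉₊).Finite := hT.image _
    apply Set.Finite.subset (Set.Finite.pi fun _ : X => hTim)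
    rintro _ ⟨g, hg, rfl⟩
    intro x _
    refine ⟨⌊(g x + 1) / ε⌋₊, ?_, rfl⟩
    have h1 := (hg x).1
    have h2 := (hg x).2
    have : (g x + 1) / ε ≤ 2 / ε := by
      gcongr <;> linarith
    simp only [Set.mem_Iic]
    calc ⌊(g x + 1) / ε⌋₊ ≤ ⌊2 / ε⌋₊ := Nat.floor_le_floor this
      _ ≤ ⌈2 / ε⌉₊ := Nat.floor_le_ceil _
lemma volume_l1_ball (r : ℝ) :
    volume {f : X → ℝ | ∑ x, |f x| ≤ r} =
      ENNReal.ofReal r ^ Fintype.card X *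
        ENNReal.ofReal (2 ^ Fintype.card X / (Fintype.card X).factorial) := by
  have h := MeasureTheory.volume_sum_rpow_le (ι := X) (p := 1) le_rfl r
  have hset : {x : X → ℝ | (∑ i, |x i| ^ (1:ℝ)) ^ (1 / (1:ℝ)) ≤ r}
      = {f : X → ℝ | ∑ x, |f x| ≤ r} := by
    ext f
    simp [Real.rpow_one]
  rw [hset] at h
  rw [h]
  congr 2
  have h2 : (1:ℝ) / 1 + 1 = 2 := by norm_num
  rw [h2, Real.Gamma_two, mul_one]
  have h3 : (Fintype.card X : ℝ) / 1 + 1 = (Fintype.card X : ℝ) + 1 := by norm_num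
  rw [h3, Real.Gamma_nat_eq_factorial]

lemma cover_card_lb {n : ℕ} (hcard : Fintype.card X = n) (hn : 1 ≤ n) {ε : ℝ}
    (hε : 0 < ε) (C : Set (X → ℝ))
    (hC : IsCover (PMF.uniformOfFintype X) {d : X → ℝ | Dist1 d} {d : X → ℝ | Dist1 d} ε C) :
    ((⌈(1 / (Real.exp 1 * ε)) ^ n⌉₊ : ℕ∞)) ≤ C.encard := by
  classical
  by_cases hfin : C.Finite
  swap
  · rw [Set.Infinite.encard_eq hfin]; exact le_top
  set F : Finset (X → ℝ) := hfin.toFinset with hF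
  set N : ℕ := F.card with hNdef
  -- the L1 balls
  set r : ℝ := n * ε with hr
  have hrpos : 0 < r := by positivity
  -- D set as a pi set
  have hD : {d : X → ℝ | Dist1 d} = Set.pi Set.univ (fun _ : X => Set.Icc (-1:ℝ) 1) := by
    ext d
    simp only [Set.mem_setOf_eq, Set.mem_pi, Set.mem_univ, Set.mem_Icc, forall_true_left, Dist1, true_implies]
  have hvolD : volume {d : X → ℝ | Dist1 d} = ENNReal.ofReal 2 ^ n := by
    rw [hD, volume_pi_pi]
    simp [Real.volume_Icc, ← hcard]
    norm_num
  -- covering by balls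
  have hsub : {d : X → ℝ | Dist1 d} ⊆
      ⋃ c ∈ F, {f : X → ℝ | ∑ x, |f x - c x| ≤ r} := by
    intro g hg
    obtain ⟨c, hcC, hcd⟩ := hC.2 g hg
    rw [dnorm_uniform, hcard] at hcd
    have hnpos : (0:ℝ) < n := by exact_mod_cast hn
    rw [div_le_iff₀ hnpos] at hcd
    refine Set.mem_biUnion (hfin.mem_toFinset.mpr hcC) ?_
    simp only [Set.mem_setOf_eq]
    calc ∑ x, |g x - c x| = ∑ x, |(g - c) x| := by simp [Pi.sub_apply]
      _ ≤ ε * n := hcd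
      _ = r := by rw [hr]; ring
  -- volume bound
  have hball : ∀ c : X → ℝ, volume {f : X → ℝ | ∑ x, |f x - c x| ≤ r}
      = ENNReal.ofReal r ^ n * ENNReal.ofReal (2 ^ n / n.factorial) := by
    intro c
    have hpre : {f : X → ℝ | ∑ x, |f x - c x| ≤ r}
        = (fun f : X → ℝ => f + (-c)) ⁻¹' {f : X → ℝ | ∑ x, |f x| ≤ r} := by
      ext f
      simp [sub_eq_add_neg]
    rw [hpre, measure_preimage_add_right, volume_l1_ball, hcard]
  have hchain : ENNReal.ofReal 2 ^ n ≤
      (N : ℝ≥0∞) * (ENNReal.ofReal r ^ n * ENNReal.ofReal (2 ^ n / n.factorial)) := by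
    calc ENNReal.ofReal 2 ^ n = volume {d : X → ℝ | Dist1 d} := hvolD.symm
      _ ≤ volume (⋃ c ∈ F, {f : X → ℝ | ∑ x, |f x - c x| ≤ r}) := measure_mono hsub
      _ ≤ ∑ c ∈ F, volume {f : X → ℝ | ∑ x, |f x - c x| ≤ r} :=
          measure_biUnion_finset_le _ _
      _ = (N : ℝ≥0∞) * (ENNReal.ofReal r ^ n * ENNReal.ofReal (2 ^ n / n.factorial)) := by
          rw [Finset.sum_congr rfl fun c _ => hball c, Finset.sum_const, hNdef,
            nsmul_eq_mul]
  -- convert to a real inequality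
  have hfacpos : (0:ℝ) < n.factorial := by exact_mod_cast n.factorial_pos
  have hKnn : (0:ℝ) ≤ 2 ^ n / n.factorial := by positivity
  have hreal : (2:ℝ) ^ n ≤ (N:ℝ) * (r ^ n * (2 ^ n / n.factorial)) := by
    have h1 : ENNReal.ofReal ((2:ℝ) ^ n)
        ≤ ENNReal.ofReal ((N:ℝ) * (r ^ n * (2 ^ n / n.factorial))) := by
      rw [ENNReal.ofReal_pow (by norm_num : (0:ℝ) ≤ 2)]
      rw [ENNReal.ofReal_mul (by positivity : (0:ℝ) ≤ (N:ℝ))]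
      rw [ENNReal.ofReal_mul (by positivity : (0:ℝ) ≤ r ^ n)]
      rw [ENNReal.ofReal_pow hrpos.le, ENNReal.ofReal_natCast]
      exact hchain
    exact (ENNReal.ofReal_le_ofReal_iff (by positivity)).mp h1
  -- algebra
  have hexp : (n:ℝ) ^ n ≤ n.factorial * Real.exp 1 ^ n := by
    have h0 := Real.pow_div_factorial_le_exp (x := (n:ℝ)) (by positivity) n
    rw [div_le_iff₀ hfacpos] at h0
    have he : Real.exp (n:ℝ) = Real.exp 1 ^ n := by
      rw [← Real.exp_nat_mul, mul_one]
    rw [he] at h0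
    linarith
  have hfacle : (n.factorial : ℝ) ≤ (N:ℝ) * (n * ε) ^ n := by
    have h2 := mul_le_mul_of_nonneg_right hreal hfacpos.le
    have h3 : (N:ℝ) * (r ^ n * (2 ^ n / n.factorial)) * n.factorial
        = (N:ℝ) * r ^ n * 2 ^ n := by
      field_simp
    rw [h3] at h2
    have h2pow : (0:ℝ) < 2 ^ n := by positivity
    have := le_of_mul_le_mul_right (by linarith [h2] : (n.factorial:ℝ) * 2 ^ n ≤ ((N:ℝ) * r ^ n) * 2 ^ n) h2pow
    rwa [hr] at this
  have hnpos : (0:ℝ) < (n:ℝ) := by exact_mod_cast hn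
  have hkey : 1 ≤ (N:ℝ) * (Real.exp 1 * ε) ^ n := by
    have hnn : (0:ℝ) < (n:ℝ) ^ n := by positivity
    have step : (n:ℝ) ^ n ≤ (N:ℝ) * (n:ℝ) ^ n * ε ^ n * Real.exp 1 ^ n := by
      calc (n:ℝ) ^ n ≤ n.factorial * Real.exp 1 ^ n := hexp
        _ ≤ (N:ℝ) * (n * ε) ^ n * Real.exp 1 ^ n := by
            apply mul_le_mul_of_nonneg_right hfacle (by positivity)
        _ = (N:ℝ) * (n:ℝ) ^ n * ε ^ n * Real.exp 1 ^ n := by rw [mul_pow]; ring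
    have : (n:ℝ) ^ n * 1 ≤ (n:ℝ) ^ n * ((N:ℝ) * (Real.exp 1 * ε) ^ n) := by
      rw [mul_pow]
      nlinarith [step]
    have := le_of_mul_le_mul_left this hnn
    linarith
  have hfinal : (1 / (Real.exp 1 * ε)) ^ n ≤ (N:ℝ) := by
    have hpos : (0:ℝ) < (Real.exp 1 * ε) ^ n := by positivity
    rw [div_pow, one_pow, div_le_iff₀ hpos]
    linarith
  have hNat : ⌈(1 / (Real.exp 1 * ε)) ^ n⌉₊ ≤ N := Nat.ceil_le.mpr hfinal
  rw [hfin.encard_eq_coe_toFinset_card]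
  exact_mod_cast hNat

end OIProof

open OI

/-- for `μ` uniform over a finite set `X` of size `n ≥ 1` and `ε ∈ (0, 1/e)`,
`log N_{μ,[−1,1]^X}([−1,1]^X, ε) ≥ n · log(1/(eε))`. -/
theorem statement_19 {X : Type} [Fintype X] [Nonempty X] (n : ℕ)
    (hcard : Fintype.card X = n) (hn : 1 ≤ n) (ε : ℝ)
    (hε : ε ∈ Set.Ioo (0 : ℝ) (Real.exp 1)⁻¹) :
    (n : ℝ) * Real.logb 2 (1 / (Real.exp 1 * ε)) ≤
      elog2 (covN (PMF.uniformOfFintype X)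
        {d : X → ℝ | Dist1 d} {d : X → ℝ | Dist1 d} ε) := by
  obtain ⟨hε0, hεe⟩ := hε
  set K := covN (PMF.uniformOfFintype X) {d : X → ℝ | Dist1 d} {d : X → ℝ | Dist1 d} ε
    with hK
  set m : ℕ := ⌈(1 / (Real.exp 1 * ε)) ^ n⌉₊ with hm
  have hlb : (m : ℕ∞) ≤ K := by
    rw [hK, covN]
    exact le_iInf fun C => le_iInf fun hC => OIProof.cover_card_lb hcard hn hε0 C hC
  obtain ⟨C₀, hC₀, hC₀fin⟩ := OIProof.exists_finite_cover (X := X) hε0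
  have hne : K ≠ ⊤ := by
    have hle : K ≤ C₀.encard := by
      rw [hK, covN]
      exact iInf₂_le C₀ hC₀
    exact ne_top_of_le_ne_top hC₀fin.encard_lt_top.ne hle
  have hmK : m ≤ K.toNat := by
    have h := hlb
    rw [← ENat.coe_toNat hne] at h
    exact_mod_cast h
  have hxpos : (0:ℝ) < (1 / (Real.exp 1 * ε)) ^ n := by positivity
  have hx_le : (1 / (Real.exp 1 * ε)) ^ n ≤ (K.toNat : ℝ) :=
    le_trans (Nat.le_ceil _) (by exact_mod_cast hmK)
  calc (n:ℝ) * Real.logb 2 (1 / (Real.exp 1 * ε))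
      = Real.logb 2 ((1 / (Real.exp 1 * ε)) ^ n) := (Real.logb_pow _ _ _).symm
    _ ≤ Real.logb 2 (K.toNat : ℝ) :=
        Real.logb_le_logb_of_le one_lt_two hxpos hx_le
    _ = elog2 K := rfl
end
end
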